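/- For any ploidy profile m on X and any choice of core network for m (a phylogenetic network realizing the terminal element m_t of sigma(m)), the network N(m) obtained by the traceback through the simplification sequence sigma(m) is a phylogenetic network on X that realizes m. -/

import Mathlib

/-!
Formalization preamble for "Autopolyploidy, allopolyploidy, and phylogenetic
networks with horizontal arcs" (Huber & Maher).

Networks are finite directed multigraphs whose vertices and arcs are (finitely
many) natural numbers; parallel arcs (beads) are allowed, loops are not.
-/

namespace Ploidy

/-- A finite directed multigraph: both vertex names and arc identifiers are
natural numbers; `src`/`tgt` give the endpoints of each arc. -/
structure Net where
  verts : Finset ℕ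
  arcs : Finset ℕ
  src : ℕ → ℕ
  tgt : ℕ → ℕ

/-- The indegree of a vertex. -/
def inDeg (G : Net) (v : ℕ) : ℕ := (G.arcs.filter fun a => G.tgt a = v).card

/-- The outdegree of a vertex. -/
def outDeg (G : Net) (v : ℕ) : ℕ := (G.arcs.filter fun a => G.src a = v).card

def IsLeafN (G : Net) (v : ℕ) : Prop := v ∈ G.verts ∧ inDeg G v = 1 ∧ outDeg G v = 0
def IsTreeVert (G : Net) (v : ℕ) : Prop := v ∈ G.verts ∧ inDeg G v = 1 ∧ outDeg G v = 2
def IsReticN (G : Net) (v : ℕ) : Prop := v ∈ G.verts ∧ inDeg G v = 2 ∧ outDeg G v = 1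
def IsRootN (G : Net) (v : ℕ) : Prop := v ∈ G.verts ∧ inDeg G v = 0

instance (G : Net) (v : ℕ) : Decidable (IsLeafN G v) :=
  decidable_of_iff (v ∈ G.verts ∧ inDeg G v = 1 ∧ outDeg G v = 0) Iff.rfl

/-- `IsWalk G l u v`: the list of arcs `l` forms a directed walk from `u` to `v`. -/
def IsWalk (G : Net) : List ℕ → ℕ → ℕ → Prop
  | [], u, v => u = v ∧ u ∈ G.verts
  | a :: l, u, v => a ∈ G.arcs ∧ G.src a = u ∧ IsWalk G l (G.tgt a) v

/-- The number of directed paths from `u` to `v` (in a DAG every directed walk is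
a path, and there are finitely many of them). -/
noncomputable def nPaths (G : Net) (u v : ℕ) : ℕ := Set.ncard {l : List ℕ | IsWalk G l u v}

/-- `a` is an arc from `u` to `v`. -/
def ArcFT (G : Net) (a u v : ℕ) : Prop := a ∈ G.arcs ∧ G.src a = u ∧ G.tgt a = v

/-- `u` is a parent of `v`. -/
def IsParent (G : Net) (u v : ℕ) : Prop := ∃ a, ArcFT G a u v

/-- `w` is below `u` (reachable from `u` by a directed walk, possibly `u = w`). -/
def BelowV (G : Net) (u w : ℕ) : Prop := ∃ l, IsWalk G l u w

/-- `v` is an end vertex of a pair of parallel arcs (a bead). -/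
def InBead (G : Net) (v : ℕ) : Prop :=
  ∃ a b, a ∈ G.arcs ∧ b ∈ G.arcs ∧ a ≠ b ∧ G.src a = G.src b ∧ G.tgt a = G.tgt b ∧
    (G.src a = v ∨ G.tgt a = v)

/-- `G` is beadless: there is no pair of parallel arcs. -/
def Beadless (G : Net) : Prop := ∀ v, ¬ InBead G v

/-- `G` is a (rooted, binary) phylogenetic network in the sense of Huber–Maher:
a rooted DAG, possibly with beads but without loops, with a unique root of
indegree 0 and outdegree 2, all of whose other vertices are leaves, tree
vertices or reticulation vertices. -/
structure IsPhylo (G : Net) : Prop where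
  src_mem : ∀ a ∈ G.arcs, G.src a ∈ G.verts
  tgt_mem : ∀ a ∈ G.arcs, G.tgt a ∈ G.verts
  no_loop : ∀ a ∈ G.arcs, G.src a ≠ G.tgt a
  acyclic : ∀ (v : ℕ) (l : List ℕ), l ≠ [] → ¬ IsWalk G l v v
  root_exu : ∃! r, IsRootN G r
  root_out : ∀ r, IsRootN G r → outDeg G r = 2
  types : ∀ v ∈ G.verts, IsRootN G v ∨ IsLeafN G v ∨ IsTreeVert G v ∨ IsReticN G v

/-- An HGT-consistent labelling: (P1), (P2) and (P3) (the latter required only for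
reticulation vertices not contained in beads). -/
def IsHGT (G : Net) (t : ℕ → ℝ) : Prop :=
  (∀ v ∈ G.verts, 0 ≤ t v) ∧
  (∀ a ∈ G.arcs,
      (IsReticN G (G.tgt a) → t (G.src a) ≤ t (G.tgt a)) ∧
      (¬ IsReticN G (G.tgt a) → t (G.src a) < t (G.tgt a))) ∧
  (∀ u ∈ G.verts, ¬ IsLeafN G u → ∃ v, IsParent G u v ∧ t u < t v) ∧
  (∀ v, IsReticN G v → ¬ InBead G v → ∃! u, IsParent G u v ∧ t u = t v)

/-- `v` is a reticulation vertex (not contained in a bead) violating (P3). -/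
def ViolatesP3 (G : Net) (t : ℕ → ℝ) (v : ℕ) : Prop :=
  IsReticN G v ∧ ¬ InBead G v ∧ ¬ (∃! u, IsParent G u v ∧ t u = t v)

/-- A weak HGT-consistent labelling: (P1), (P2) and (P3'): at most one reticulation
vertex `v`, with distinct parents `u₁, u₂` such that `u₂` is below `u₁` and
`t u₁ ≠ t v ≠ t u₂`, violates (P3). -/
def IsWeakHGT (G : Net) (t : ℕ → ℝ) : Prop :=
  (∀ v ∈ G.verts, 0 ≤ t v) ∧
  (∀ a ∈ G.arcs,
      (IsReticN G (G.tgt a) → t (G.src a) ≤ t (G.tgt a)) ∧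
      (¬ IsReticN G (G.tgt a) → t (G.src a) < t (G.tgt a))) ∧
  (∀ u ∈ G.verts, ¬ IsLeafN G u → ∃ v, IsParent G u v ∧ t u < t v) ∧
  (∀ v w, ViolatesP3 G t v → ViolatesP3 G t w → v = w) ∧
  (∀ v, ViolatesP3 G t v →
      ∃ u1 u2, u1 ≠ u2 ∧ IsParent G u1 v ∧ IsParent G u2 v ∧ BelowV G u1 u2 ∧
        t u1 ≠ t v ∧ t u2 ≠ t v)

/-! ### Ploidy profiles and the simplification sequence -/

/-- A ploidy profile: a nonempty descending list of positive integers; the entry at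
(0-based) position `i` is indexed by the taxon `x_{i+1}`. -/
def IsProfileL (l : List ℕ) : Prop := l ≠ [] ∧ l.Pairwise (· ≥ ·) ∧ ∀ x ∈ l, 1 ≤ x

/-- A simple ploidy profile: first component at least 2, all other components 1. -/
def IsSimpleP (l : List ℕ) : Prop := l ≠ [] ∧ 2 ≤ l.headI ∧ ∀ x ∈ l.tail, x = 1

/-- A strictly simple ploidy profile. -/
def IsStrictlySimpleP (l : List ℕ) : Prop := IsSimpleP l ∧ l.length = 1

/-- Insert `x` into a descending list, directly after the last occurrence of the
value `x` (i.e. after all entries `≥ x`). -/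
def insertDesc (x : ℕ) : List ℕ → List ℕ
  | [] => [x]
  | y :: ys => if x ≤ y then y :: insertDesc x ys else x :: y :: ys

/-- One step of the simplification process for ploidy profiles; simple profiles are
fixed points.  With `α = m₁ - m₂`: if `α = 0` delete `m₁`; if `α > m₂` replace `m₁`
by `α`; if `0 < α ≤ m₂` delete `m₁` and insert `α` directly after the last
occurrence of the value `α`. -/
def simpStep (l : List ℕ) : List ℕ :=
  if 2 ≤ l.headI ∧ ∀ x ∈ l.tail, x = 1 then l
  else
    match l with
    | m1 :: m2 :: rest =>
        if m1 = m2 then m2 :: rest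
        else if m2 < m1 - m2 then (m1 - m2) :: m2 :: rest
        else insertDesc (m1 - m2) (m2 :: rest)
    | _ => l

/-- `mt` is the (simple) terminal element of the simplification sequence of `m`. -/
def IsTerminal (m mt : List ℕ) : Prop := IsSimpleP mt ∧ ∃ k, simpStep^[k] m = mt

/-- A practical ploidy profile: simple but not strictly simple, or `(2^l)`, `l ≥ 1`. -/
def Practical (l : List ℕ) : Prop :=
  (IsSimpleP l ∧ 2 ≤ l.length) ∨ (l.length = 1 ∧ ∃ j, 1 ≤ j ∧ l.headI = 2 ^ j)

/-- An arc-rich (strictly simple) ploidy profile: the binary representation of its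
single component has dimension at least two. -/
def ArcRich (l : List ℕ) : Prop :=
  l.length = 1 ∧ 2 ≤ l.headI ∧ 2 ≤ (Nat.bits l.headI).count true

/-! ### Realizations of ploidy profiles -/

/-- A network together with an indexing of its leaves by the positions of a
ploidy profile. -/
structure LNet where
  net : Net
  leaf : ℕ → ℕ

/-- `R` is a phylogenetic network realizing the ploidy profile `m`: the leaves of
`R.net` are bijectively indexed by the positions of `m` and, for every `i`, the
number of directed paths from the root to the leaf `R.leaf i` is the `i`-th
component of `m`. -/
def RealizesL (R : LNet) (m : List ℕ) : Prop :=
  IsPhylo R.net ∧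
  (∀ i < m.length, IsLeafN R.net (R.leaf i)) ∧
  (∀ i j, i < m.length → j < m.length → R.leaf i = R.leaf j → i = j) ∧
  (∀ v, IsLeafN R.net v → ∃ i < m.length, R.leaf i = v) ∧
  (∀ i < m.length, ∀ r, IsRootN R.net r → nPaths R.net r (R.leaf i) = m.getD i 0)

/-! ### Concrete constructions: bead chains and the core network `B(m)` -/

/-- Build a network from a list of arcs (as (source, target) pairs); arc
identifiers are positions in the list, so repeated pairs yield beads. -/
def mkNet (l : List (ℕ × ℕ)) : Net where
  verts := (l.map Prod.fst ++ l.map Prod.snd).toFinset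
  arcs := Finset.range l.length
  src := fun i => (l.getD i (0, 0)).1
  tgt := fun i => (l.getD i (0, 0)).2

/-- The chain `B(l)` of `l` beads with a pendant leaf: vertex `2*j` is the tree
vertex of the `(j+1)`-st bead, `2*j+1` its reticulation vertex `h_{j+1}`, there is
an arc from `h_j` to the tree vertex of the next bead, and `2*l` is the pendant
leaf `x₁` attached by the arc `(h_l, x₁)`. -/
def beadChain (l : ℕ) : Net :=
  mkNet ((List.range l).flatMap fun j => [(2*j, 2*j+1), (2*j, 2*j+1), (2*j+1, 2*j+2)])

/-- The decreasing list `(i₁, …, i_k)` of exponents of the binary representation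
of `m₁`. -/
def expList (m1 : ℕ) : List ℕ :=
  ((List.range (m1+1)).filter fun j => m1.testBit j).reverse

/-- First vertex code available for the leaves `x_2, …, x_n` in `BNet`. -/
def xBase (m1 : ℕ) : ℕ := 2 * (expList m1).headI + 2 * (expList m1).length + 10

/-- The arcs of the core network `B(m)` for the simple profile `(m₁, 1, …, 1)` on
`n` taxa: a chain of `i₁` beads with pendant leaf `x₁ = 0` (root is the vertex
`2`), one root arc subdivided by `s_k` and, for `2 ≤ j ≤ k`, an arc `(s_j, s_j')`
where `s_j'` subdivides the outgoing arc of the reticulation vertex having exactly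
`i_j` reticulation vertices strictly below it and `s_2, …, s_{k-1}` subdivide the
arc `(s_k, s_k')`; if `n ≥ 2` a caterpillar tree on the leaves `x_2, …, x_n`
(codes `xBase m₁ + i`) is attached via a subdivision vertex `w` (placed on a root
arc if `k = 1`, on `(s_k, s_k')` if `k = 2`, and on `(s_{k-1}, s_k')` if `k ≥ 3`). -/
def BArcs (m1 n : ℕ) : List (ℕ × ℕ) :=
  let E := expList m1
  let k := E.length
  let i1 := E.headI
  let hv : ℕ → ℕ := fun j => 2*j + 1
  let tv : ℕ → ℕ := fun j => 2*j
  let nxt : ℕ → ℕ := fun j => if j = i1 then 0 else 2*j + 2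
  let S' : ℕ → ℕ := fun j => 2*i1 + 2 + j
  let P : ℕ → ℕ := fun j => 2*i1 + k + 2 + j
  let w : ℕ := 2*i1 + 2*k + 4
  let L : ℕ := 2*i1 + 2*k + 10
  let x : ℕ → ℕ := fun i => L + i
  let cv : ℕ → ℕ := fun i => L + n + i
  let r : ℕ → ℕ := fun t => i1 - E.getD (t-1) 0
  let rootArcs : List (ℕ × ℕ) :=
    if 2 ≤ k then [(tv 1, hv 1), (tv 1, P k), (P k, hv 1)]
    else if 2 ≤ n then [(tv 1, hv 1), (tv 1, w), (w, hv 1)]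
    else [(tv 1, hv 1), (tv 1, hv 1)]
  let otherBeads : List (ℕ × ℕ) :=
    (List.range' 2 (i1 - 1)).flatMap fun j => [(tv j, hv j), (tv j, hv j)]
  let chainArcs : List (ℕ × ℕ) :=
    (List.range' 1 i1).flatMap fun j =>
      match (List.range' 2 (k-1)).find? (fun t => r t == j) with
      | some t => [(hv j, S' t), (S' t, nxt j)]
      | none => [(hv j, nxt j)]
  let sChain : List ℕ :=
    [P k] ++ (List.range' 2 (k-2)).map P ++ (if 2 ≤ n then [w] else []) ++ [S' k]
  let sArcs : List (ℕ × ℕ) :=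
    if 2 ≤ k then (sChain.zip sChain.tail) ++ (List.range' 2 (k-2)).map (fun j => (P j, S' j))
    else []
  let catArcs : List (ℕ × ℕ) :=
    if n ≤ 1 then []
    else if n = 2 then [(w, x 2)]
    else [(w, cv 2)] ++
      ((List.range' 2 (n-3)).flatMap fun i => [(cv i, x i), (cv i, cv (i+1))]) ++
      [(cv (n-1), x (n-1)), (cv (n-1), x n)]
  rootArcs ++ otherBeads ++ chainArcs ++ sArcs ++ catArcs

/-- The core network `B(m)` for a simple profile with first component `m1` on `n`
taxa. -/
def BNet (m1 n : ℕ) : Net := mkNet (BArcs m1 n)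

/-- The core network `B(m)` of a ploidy profile whose terminal element is `mt`,
together with its leaf indexing (leaf `0` is `x₁ = 0`, leaf `i` is `x_{i+1}`). -/
def BLNet (mt : List ℕ) : LNet where
  net := BNet mt.headI mt.length
  leaf := fun i => if i = 0 then 0 else xBase mt.headI + (i + 1)

/-- The naive realization of the simple profile `(m₁, 1, …, 1)` on `n` taxa: a
directed path `0, 1, …, n + 2m₁ - 3` (with `v_j = j - 1`, `w_i = m₁ + i - 3`,
`v_j' = n + 2m₁ - 3 - j` and `x₁ = n + 2m₁ - 3`) together with the arcs
`(v_j, v_j')` and the pendant leaf arcs `(w_i, x_i)` with `x_i = n + 2m₁ + i`. -/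
def naiveNet (m1 n : ℕ) : Net :=
  mkNet (((List.range (n + 2*m1 - 3)).map fun p => (p, p+1)) ++
    ((List.range' 1 (m1 - 1)).map fun j => (j - 1, n + 2*m1 - 3 - j)) ++
    ((List.range' 2 (n - 1)).map fun i => (m1 + i - 3, n + 2*m1 + i)))

/-! ### Cherry modification operations -/

/-- `reduce(a,b)`: delete the leaf `b` of the cherry `{a,b}` together with its
incoming arc and suppress the resulting degree-two vertex (collapsing the network
to the single vertex `a` when the common parent is the root). -/
def ReduceOp (G G' : Net) : Prop :=
  ∃ a b p ea eb, a ≠ b ∧ IsLeafN G a ∧ IsLeafN G b ∧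
    ArcFT G ea p a ∧ ArcFT G eb p b ∧ ea ≠ eb ∧
    G'.verts = (G.verts.erase b).erase p ∧
    G'.arcs = (G.arcs.erase eb).erase ea ∧
    ((IsRootN G p ∧ ∀ e ∈ G'.arcs, G'.src e = G.src e ∧ G'.tgt e = G.tgt e) ∨
     (∃ ep q, ArcFT G ep q p ∧
        (∀ e ∈ G'.arcs, e ≠ ep → G'.src e = G.src e ∧ G'.tgt e = G.tgt e) ∧
        G'.src ep = q ∧ G'.tgt ep = a))

/-- `cut(a,b)`: delete the reticulation arc of the reticulate cherry `{a,b}` with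
reticulation leaf `b`, suppressing the two resulting degree-two vertices. -/
def CutOp (G G' : Net) : Prop :=
  ∃ a b pa pb e1 e2 e3 e4 e5 q r,
    a ≠ b ∧ IsLeafN G a ∧ IsLeafN G b ∧ IsReticN G pb ∧
    ArcFT G e1 pa a ∧ ArcFT G e2 pb b ∧ ArcFT G e3 pa pb ∧
    ArcFT G e4 q pb ∧ e3 ≠ e4 ∧ ArcFT G e5 r pa ∧
    G'.verts = (G.verts.erase pa).erase pb ∧
    G'.arcs = ((G.arcs.erase e3).erase e1).erase e2 ∧
    (∀ e ∈ G'.arcs, e ≠ e4 → e ≠ e5 → G'.src e = G.src e ∧ G'.tgt e = G.tgt e) ∧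
    G'.src e5 = r ∧ G'.tgt e5 = a ∧
    G'.src e4 = q ∧ G'.tgt e4 = b

/-- `simp(a)`: for a type-1 degenerate cherry `{a}` (sole leaf whose parent is the
reticulation vertex of a bead), delete one arc of the bead, suppressing the
resulting degree-two vertex and collapsing the outgoing arc of the tree vertex of
the bead. -/
def SimpOp (G G' : Net) : Prop :=
  ∃ a h u e1 e2 e3,
    IsLeafN G a ∧ (∀ w, IsLeafN G w → w = a) ∧ IsReticN G h ∧
    ArcFT G e1 u h ∧ ArcFT G e2 u h ∧ e1 ≠ e2 ∧ ArcFT G e3 h a ∧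
    ((IsRootN G u ∧ G'.verts = {a} ∧ G'.arcs = ∅) ∨
     (∃ eu q, ArcFT G eu q u ∧
        G'.verts = (G.verts.erase h).erase u ∧
        G'.arcs = ((G.arcs.erase e2).erase e3).erase e1 ∧
        (∀ e ∈ G'.arcs, e ≠ eu → G'.src e = G.src e ∧ G'.tgt e = G.tgt e) ∧
        G'.src eu = q ∧ G'.tgt eu = a))

/-- `trim(a)`: for a type-2 degenerate cherry `{a}` (sole leaf whose parent `p` is
a reticulation vertex with distinct parents `q₁, q₂`), delete the arc `(q₁,p)`
(case (a): there is a vertex `q` with arcs `(q,q₁)`, `(q,q₂)`, `(q₁,q₂)`),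
respectively one of the two parallel arcs from `q` to `q₂` (case (b): there is an
arc `(q₁,q)` and a pair of parallel arcs from `q` to `q₂`), suppressing the two
resulting degree-two vertices. -/
def TrimOp (G G' : Net) : Prop :=
  ∃ a p g0, IsLeafN G a ∧ (∀ w, IsLeafN G w → w = a) ∧ IsReticN G p ∧ ArcFT G g0 p a ∧
   ((∃ q q1 q2 f1 f2 f3 g1 g2,
      ArcFT G g1 q1 p ∧ ArcFT G g2 q2 p ∧ g1 ≠ g2 ∧ q1 ≠ q2 ∧
      ArcFT G f1 q q1 ∧ ArcFT G f2 q q2 ∧ ArcFT G f3 q1 q2 ∧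
      G'.verts = (G.verts.erase q1).erase p ∧
      G'.arcs = ((G.arcs.erase g1).erase f3).erase g0 ∧
      (∀ e ∈ G'.arcs, e ≠ f1 → e ≠ g2 → G'.src e = G.src e ∧ G'.tgt e = G.tgt e) ∧
      G'.src f1 = q ∧ G'.tgt f1 = q2 ∧
      G'.src g2 = q2 ∧ G'.tgt g2 = a) ∨
    (∃ q q1 q2 eq' f1 f2 g1 g2,
      ArcFT G g1 q1 p ∧ ArcFT G g2 q2 p ∧ g1 ≠ g2 ∧ q1 ≠ q2 ∧
      ArcFT G eq' q1 q ∧ ArcFT G f1 q q2 ∧ ArcFT G f2 q q2 ∧ f1 ≠ f2 ∧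
      G'.verts = (G.verts.erase q).erase q2 ∧
      G'.arcs = ((G.arcs.erase f2).erase f1).erase g2 ∧
      (∀ e ∈ G'.arcs, e ≠ eq' → G'.src e = G.src e ∧ G'.tgt e = G.tgt e) ∧
      G'.src eq' = q1 ∧ G'.tgt eq' = p))

/-- A single cherry modification operation: reduce, cut or simp. -/
def CherryModOp (G G' : Net) : Prop := ReduceOp G G' ∨ CutOp G G' ∨ SimpOp G G'

/-- A single weak cherry modification operation: reduce, cut, simp or trim. -/
def WeakCherryModOp (G G' : Net) : Prop := CherryModOp G G' ∨ TrimOp G G'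

/-- The network consisting of a single vertex (and no arcs). -/
def IsSingleV (G : Net) : Prop := ∃ v, G.verts = {v} ∧ G.arcs = ∅

/-- `G` admits a complete cherry modification sequence, i.e. `G` is an orchard. -/
def IsOrchardN (G : Net) : Prop :=
  ∃ G', Relation.ReflTransGen CherryModOp G G' ∧ IsSingleV G'

/-- `G` admits a complete weak cherry modification sequence, i.e. `G` is a weak
orchard. -/
def IsWeakOrchardN (G : Net) : Prop :=
  ∃ G', Relation.ReflTransGen WeakCherryModOp G G' ∧ IsSingleV G'

/-! ### The traceback through the simplification sequence -/

/-- Traceback step in case `α = 0`: replace the leaf indexing the first component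
of `m''` by a cherry on two new leaves. -/
def CherryExpandOp (R'' R' : LNet) : Prop :=
  ∃ y1 y2 b1 b2,
    y1 ∉ R''.net.verts ∧ y2 ∉ R''.net.verts ∧ y1 ≠ y2 ∧
    b1 ∉ R''.net.arcs ∧ b2 ∉ R''.net.arcs ∧ b1 ≠ b2 ∧
    R'.net.verts = R''.net.verts ∪ {y1, y2} ∧
    R'.net.arcs = R''.net.arcs ∪ {b1, b2} ∧
    (∀ a ∈ R''.net.arcs, R'.net.src a = R''.net.src a ∧ R'.net.tgt a = R''.net.tgt a) ∧
    R'.net.src b1 = R''.leaf 0 ∧ R'.net.tgt b1 = y1 ∧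
    R'.net.src b2 = R''.leaf 0 ∧ R'.net.tgt b2 = y2 ∧
    R'.leaf 0 = y1 ∧ R'.leaf 1 = y2 ∧ (∀ i, 1 ≤ i → R'.leaf (i + 1) = R''.leaf i)

/-- Traceback step in case `α > m₂'`: subdivide the incoming arcs of the leaves
indexing the first and second components of `m''` by new vertices `u` and `v` and
add the arc `(v,u)`. -/
def AddArcOp (R'' R' : LNet) : Prop :=
  ∃ u v a0 a1 b0 b1 c,
    u ∉ R''.net.verts ∧ v ∉ R''.net.verts ∧ u ≠ v ∧
    a0 ∈ R''.net.arcs ∧ R''.net.tgt a0 = R''.leaf 0 ∧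
    a1 ∈ R''.net.arcs ∧ R''.net.tgt a1 = R''.leaf 1 ∧ a0 ≠ a1 ∧
    b0 ∉ R''.net.arcs ∧ b1 ∉ R''.net.arcs ∧ c ∉ R''.net.arcs ∧
    b0 ≠ b1 ∧ b0 ≠ c ∧ b1 ≠ c ∧
    R'.net.verts = R''.net.verts ∪ {u, v} ∧
    R'.net.arcs = R''.net.arcs ∪ {b0, b1, c} ∧
    (∀ a ∈ R''.net.arcs, a ≠ a0 → a ≠ a1 →
        R'.net.src a = R''.net.src a ∧ R'.net.tgt a = R''.net.tgt a) ∧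
    R'.net.src a0 = R''.net.src a0 ∧ R'.net.tgt a0 = u ∧
    R'.net.src a1 = R''.net.src a1 ∧ R'.net.tgt a1 = v ∧
    R'.net.src b0 = u ∧ R'.net.tgt b0 = R''.leaf 0 ∧
    R'.net.src b1 = v ∧ R'.net.tgt b1 = R''.leaf 1 ∧
    R'.net.src c = v ∧ R'.net.tgt c = u ∧
    (∀ i, R'.leaf i = R''.leaf i)

/-- Traceback step in case `0 < α ≤ m₂'`, where the inserted component `α` sits at
(0-based) position `j` of `m''`: subdivide the incoming arc of the leaf indexing
`α` by a vertex `v`, replace the leaf indexing the first component of `m''` by a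
cherry, subdivide the incoming arc of one of the two new cherry leaves by a vertex
`u`, add the arc `(v,u)` and delete the leaf indexing `α` together with its
incoming arc, suppressing the resulting degree-two vertex. -/
def InsertBackOp (j : ℕ) (R'' R' : LNet) : Prop :=
  ∃ u y1 y2 c1 c2 c3 az,
    u ∉ R''.net.verts ∧ y1 ∉ R''.net.verts ∧ y2 ∉ R''.net.verts ∧
    u ≠ y1 ∧ u ≠ y2 ∧ y1 ≠ y2 ∧
    c1 ∉ R''.net.arcs ∧ c2 ∉ R''.net.arcs ∧ c3 ∉ R''.net.arcs ∧
    c1 ≠ c2 ∧ c1 ≠ c3 ∧ c2 ≠ c3 ∧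
    az ∈ R''.net.arcs ∧ R''.net.tgt az = R''.leaf j ∧
    R'.net.verts = (R''.net.verts.erase (R''.leaf j)) ∪ {u, y1, y2} ∧
    R'.net.arcs = R''.net.arcs ∪ {c1, c2, c3} ∧
    (∀ a ∈ R''.net.arcs, a ≠ az →
        R'.net.src a = R''.net.src a ∧ R'.net.tgt a = R''.net.tgt a) ∧
    R'.net.src az = R''.net.src az ∧ R'.net.tgt az = u ∧
    R'.net.src c1 = R''.leaf 0 ∧ R'.net.tgt c1 = u ∧
    R'.net.src c2 = u ∧ R'.net.tgt c2 = y1 ∧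
    R'.net.src c3 = R''.leaf 0 ∧ R'.net.tgt c3 = y2 ∧
    R'.leaf 0 = y1 ∧ R'.leaf 1 = y2 ∧
    (∀ i, 1 ≤ i → i < j → R'.leaf (i + 1) = R''.leaf i) ∧
    (∀ i, j < i → R'.leaf i = R''.leaf i)

/-- One step of the traceback: `R'` is a realization of the non-simple profile `m'`
obtained from the realization `R''` of `simpStep m'` by the surgery dictated by the
case (`α = 0`, `α > m₂'` or `0 < α ≤ m₂'`) that produced `simpStep m'` from `m'`. -/
def TraceStep (m' : List ℕ) (R'' R' : LNet) : Prop :=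
  2 ≤ m'.length ∧ ¬ IsSimpleP m' ∧
  ((m'.headI = m'.tail.headI ∧ CherryExpandOp R'' R') ∨
   (m'.tail.headI < m'.headI - m'.tail.headI ∧ AddArcOp R'' R') ∨
   (0 < m'.headI - m'.tail.headI ∧ m'.headI - m'.tail.headI ≤ m'.tail.headI ∧
     InsertBackOp
       ((m'.tail.takeWhile fun y => decide (m'.headI - m'.tail.headI ≤ y)).length)
       R'' R'))

/-- `TracebackFrom core m N`: `N` is a network `N(m)` obtainable by the traceback
through the simplification sequence of `m`, initialized with the core network
`core`. -/
inductive TracebackFrom (core : LNet) : List ℕ → LNet → Prop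
  | base (m : List ℕ) : IsSimpleP m → TracebackFrom core m core
  | step (m' : List ℕ) (R'' R' : LNet) :
      TracebackFrom core (simpStep m') R'' → TraceStep m' R'' R' →
      TracebackFrom core m' R'

/-! ### Tree-based and tree-child networks -/

def subIn (G : Net) (A : Finset ℕ) (v : ℕ) : ℕ := (A.filter fun a => G.tgt a = v).card
def subOut (G : Net) (A : Finset ℕ) (v : ℕ) : ℕ := (A.filter fun a => G.src a = v).card

/-- `G` is tree-based: some subset `A` of its arcs forms a spanning subdivision of a
rooted phylogenetic tree (with one extra incoming arc added to its root) whose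
leaves are exactly the leaves of `G`; all remaining arcs of `G` join subdivision
vertices, and every subdivision vertex has total degree 3 in `G`. -/
def IsTreeBased (G : Net) : Prop :=
  ∃ A : Finset ℕ, A ⊆ G.arcs ∧
    (∃! r, r ∈ G.verts ∧ subIn G A r = 0) ∧
    (∀ r ∈ G.verts, subIn G A r = 0 → subOut G A r = 1) ∧
    (∀ v ∈ G.verts,
        (subIn G A v = 0 ∧ subOut G A v = 1) ∨ (subIn G A v = 1 ∧ subOut G A v = 0) ∨
        (subIn G A v = 1 ∧ subOut G A v = 1) ∨ (subIn G A v = 1 ∧ subOut G A v = 2)) ∧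
    (∀ v ∈ G.verts, subIn G A v = 1 → subOut G A v = 0 → IsLeafN G v) ∧
    (∀ v, IsLeafN G v → subIn G A v = 1 ∧ subOut G A v = 0) ∧
    (∀ a ∈ G.arcs, a ∉ A →
        subIn G A (G.src a) = 1 ∧ subOut G A (G.src a) = 1 ∧
        subIn G A (G.tgt a) = 1 ∧ subOut G A (G.tgt a) = 1) ∧
    (∀ v ∈ G.verts, subIn G A v = 1 → subOut G A v = 1 → inDeg G v + outDeg G v = 3)

/-- `G` is tree-child (reticulation vertices contained in beads being ignored):
every vertex has a directed path to a leaf on which every vertex except possibly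
the first one is either not a reticulation vertex or is contained in a bead. -/
def IsTreeChild (G : Net) : Prop :=
  ∀ v ∈ G.verts, ∃ (l : List ℕ) (w : ℕ), IsWalk G l v w ∧ IsLeafN G w ∧
    ∀ a ∈ l, IsReticN G (G.tgt a) → InBead G (G.tgt a)

/-! ### Multiple-labelled networks and the split operation -/

/-- A multiple-labelled network: a network together with a labelling map assigning
to each leaf vertex the (0-based) position of the profile component it is labelled
with; distinct leaves may carry the same label. -/
structure MLNet where
  net : Net
  lab : ℕ → ℕ

/-- A multiple-labelled tree: a multiple-labelled network without reticulation
vertices. -/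
def IsMLTree (R : MLNet) : Prop := ∀ v, ¬ IsReticN R.net v

/-- The multiple-labelled network `R` realizes the ploidy profile `m`: for every
position `i` of `m`, the total number of directed paths from the root to leaves
labelled `i` equals the `i`-th component of `m`. -/
def MLRealizes (R : MLNet) (m : List ℕ) : Prop :=
  IsPhylo R.net ∧
  (∀ v, IsLeafN R.net v → R.lab v < m.length) ∧
  (∀ i < m.length, ∀ r, IsRootN R.net r →
      (∑ v ∈ R.net.verts.filter (fun v => IsLeafN R.net v ∧ R.lab v = i),
          nPaths R.net r v) = m.getD i 0)

/-- The arcs of the subgraph induced by the vertices below `c`. -/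
def arcsBelow (G : Net) (c : ℕ) : Set ℕ :=
  {b | b ∈ G.arcs ∧ BelowV G c (G.src b) ∧ BelowV G c (G.tgt b)}

/-- `a` is a cut-arc of `G`: removing it disconnects its end vertices in the
underlying undirected graph. -/
def IsCutArc (G : Net) (a : ℕ) : Prop :=
  a ∈ G.arcs ∧
    ¬ Relation.ReflTransGen
        (fun x y => ∃ b ∈ G.arcs, b ≠ a ∧
          ((G.src b = x ∧ G.tgt b = y) ∨ (G.src b = y ∧ G.tgt b = x)))
        (G.src a) (G.tgt a)

/-- The split operation: `R'` is obtained from `R` by deleting a reticulation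
vertex `h` (with parents `p₁, p₂` and child `c`, where `(h,c)` is a cut-arc)
together with its three incident arcs, making a disjoint copy (via `φ` on vertices
and `ψ` on arcs) of the subgraph induced by the vertices below `c`, and attaching
one copy of `c` to `p₁` by an arc `(p₁,c)` and the other to `p₂` by an arc
`(p₂,c)`. -/
def SplitRel (R R' : MLNet) : Prop :=
  ∃ (h p1 p2 c a0 a1 a2 : ℕ) (φ ψ : ℕ → ℕ),
    IsReticN R.net h ∧
    ArcFT R.net a0 h c ∧ IsCutArc R.net a0 ∧
    ArcFT R.net a1 p1 h ∧ ArcFT R.net a2 p2 h ∧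
    a1 ≠ a2 ∧ a0 ≠ a1 ∧ a0 ≠ a2 ∧
    Set.InjOn φ {w | BelowV R.net c w} ∧
    (∀ w, BelowV R.net c w → φ w ∉ R.net.verts) ∧
    Set.InjOn ψ (arcsBelow R.net c) ∧
    (∀ b ∈ arcsBelow R.net c, ψ b ∉ R.net.arcs) ∧
    (↑R'.net.verts : Set ℕ) =
      ((↑R.net.verts : Set ℕ) \ {h}) ∪ (φ '' {w | BelowV R.net c w}) ∧
    (↑R'.net.arcs : Set ℕ) =
      ((↑R.net.arcs : Set ℕ) \ {a0}) ∪ (ψ '' arcsBelow R.net c) ∧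
    (∀ b ∈ R.net.arcs, b ≠ a0 → b ≠ a1 → b ≠ a2 →
        R'.net.src b = R.net.src b ∧ R'.net.tgt b = R.net.tgt b) ∧
    R'.net.src a1 = p1 ∧ R'.net.tgt a1 = c ∧
    R'.net.src a2 = p2 ∧ R'.net.tgt a2 = φ c ∧
    (∀ b ∈ arcsBelow R.net c,
        R'.net.src (ψ b) = φ (R.net.src b) ∧ R'.net.tgt (ψ b) = φ (R.net.tgt b)) ∧
    (∀ v ∈ R.net.verts, v ≠ h → R'.lab v = R.lab v) ∧
    (∀ w, BelowV R.net c w → R'.lab (φ w) = R.lab w)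

/-- Adjacency in ploidy profile space `𝒫(m)` (relative to an edit distance `D` on
multiple-labelled trees): both endpoints realize `m` and either one is obtained
from the other by a single split operation, or both are multiple-labelled trees at
`D`-distance 1. -/
def PEdge (m : List ℕ) (D : MLNet → MLNet → ℕ) (A B : MLNet) : Prop :=
  MLRealizes A m ∧ MLRealizes B m ∧
    (SplitRel A B ∨ SplitRel B A ∨ (IsMLTree A ∧ IsMLTree B ∧ D A B = 1))

/-! ### Infrastructure: walks -/

theorem isWalk_nil_iff (G : Net) (u v : ℕ) : IsWalk G [] u v ↔ u = v ∧ u ∈ G.verts := Iff.rfl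

theorem isWalk_cons_iff (G : Net) (a : ℕ) (l : List ℕ) (u v : ℕ) :
    IsWalk G (a :: l) u v ↔ a ∈ G.arcs ∧ G.src a = u ∧ IsWalk G l (G.tgt a) v := Iff.rfl

theorem walk_arcs_subset {G : Net} {l : List ℕ} {u v : ℕ} (h : IsWalk G l u v) :
    ∀ a ∈ l, a ∈ G.arcs := by
  induction l generalizing u with
  | nil => intro a ha; simp at ha
  | cons b t ih =>
    obtain ⟨hb, _, hw⟩ := h
    intro a ha
    rcases List.mem_cons.1 ha with rfl | ha
    · exact hb
    · exact ih hw a ha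

theorem walk_append {G : Net} {p q : List ℕ} {u w v : ℕ}
    (hp : IsWalk G p u w) (hq : IsWalk G q w v) : IsWalk G (p ++ q) u v := by
  induction p generalizing u with
  | nil => obtain ⟨rfl, _⟩ := hp; simpa using hq
  | cons b t ih =>
    obtain ⟨hb, hs, hw⟩ := hp
    exact ⟨hb, hs, ih hw⟩

theorem walk_split_cons {G : Net} {p s : List ℕ} {a u v : ℕ}
    (h : IsWalk G (p ++ a :: s) u v) : IsWalk G (a :: s) (G.src a) v := by
  induction p generalizing u with
  | nil => obtain ⟨hb, hs, hw⟩ := h; exact ⟨hb, rfl, hw⟩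
  | cons b t ih => exact ih h.2.2

theorem walk_split_full {G : Net} (hsrc : ∀ a ∈ G.arcs, G.src a ∈ G.verts)
    {p s : List ℕ} {a u v : ℕ}
    (h : IsWalk G (p ++ a :: s) u v) :
    IsWalk G p u (G.src a) ∧ IsWalk G (a :: s) (G.src a) v := by
  induction p generalizing u with
  | nil =>
    obtain ⟨hb, hs, hw⟩ := h
    exact ⟨⟨hs.symm, hs ▸ hsrc a hb⟩, hb, rfl, hw⟩
  | cons b t ih =>
    obtain ⟨hb, hs, hw⟩ := h
    obtain ⟨h1, h2⟩ := ih hw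
    exact ⟨⟨hb, hs, h1⟩, h2⟩

theorem walk_concat_iff {G : Net} (hsrc : ∀ a ∈ G.arcs, G.src a ∈ G.verts)
    (htgt : ∀ a ∈ G.arcs, G.tgt a ∈ G.verts) {l : List ℕ} {a u v : ℕ} :
    IsWalk G (l ++ [a]) u v ↔ IsWalk G l u (G.src a) ∧ a ∈ G.arcs ∧ G.tgt a = v := by
  constructor
  · intro h
    obtain ⟨h1, h2⟩ := walk_split_full hsrc h
    obtain ⟨hb, _, ht, _⟩ := h2
    exact ⟨h1, hb, ht⟩
  · rintro ⟨h1, hb, ht⟩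
    exact walk_append h1 ⟨hb, rfl, ht ▸ ⟨rfl, htgt a hb⟩⟩

theorem walk_nodup {G : Net} (hsrc : ∀ a ∈ G.arcs, G.src a ∈ G.verts)
    (hacyc : ∀ (v : ℕ) (l : List ℕ), l ≠ [] → ¬ IsWalk G l v v)
    {l : List ℕ} {u v : ℕ} (h : IsWalk G l u v) : l.Nodup := by
  induction l generalizing u with
  | nil => exact List.nodup_nil
  | cons a t ih =>
    obtain ⟨ha, hs, hw⟩ := h
    refine List.nodup_cons.2 ⟨?_, ih hw⟩
    intro hmem
    obtain ⟨s1, s2, rfl⟩ := List.append_of_mem hmem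
    obtain ⟨h1, _⟩ := walk_split_full hsrc hw
    exact hacyc (G.src a) (a :: s1) (by simp) ⟨ha, rfl, h1⟩

theorem walk_finite {G : Net} (hsrc : ∀ a ∈ G.arcs, G.src a ∈ G.verts)
    (hacyc : ∀ (v : ℕ) (l : List ℕ), l ≠ [] → ¬ IsWalk G l v v) (u v : ℕ) :
    {l : List ℕ | IsWalk G l u v}.Finite := by
  have hfin : {l : List ↥G.arcs | l.length ≤ G.arcs.card}.Finite :=
    List.finite_length_le _ _
  apply Set.Finite.subset (hfin.image (List.map Subtype.val))
  intro l hl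
  have hmem := walk_arcs_subset hl
  have hnd := walk_nodup hsrc hacyc hl
  refine ⟨l.pmap (fun a ha => (⟨a, ha⟩ : ↥G.arcs)) hmem, ?_, ?_⟩
  · have hnd2 : (l.pmap (fun a ha => (⟨a, ha⟩ : ↥G.arcs)) hmem).Nodup :=
      (List.Nodup.pmap (fun a _ b _ h => congrArg Subtype.val h) hnd)
    calc (l.pmap (fun a ha => (⟨a, ha⟩ : ↥G.arcs)) hmem).length
        = l.length := List.length_pmap
      _ ≤ G.arcs.card := by
          have := hnd2.length_le_card (α := ↥G.arcs)
          rwa [List.length_pmap, Fintype.card_coe] at this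
  · simp [List.map_pmap]

theorem walk_end_mem {G : Net} (htgt : ∀ a ∈ G.arcs, G.tgt a ∈ G.verts)
    {l : List ℕ} {u v : ℕ} (h : IsWalk G l u v) : v ∈ G.verts := by
  induction l generalizing u with
  | nil => obtain ⟨rfl, h⟩ := h; exact h
  | cons a t ih => exact ih h.2.2
/-! ### Infrastructure: path counting -/

theorem walkSet_target (G : Net) (hsrc : ∀ a ∈ G.arcs, G.src a ∈ G.verts)
    (htgt : ∀ a ∈ G.arcs, G.tgt a ∈ G.verts) {u v e : ℕ} (hne : u ≠ v)
    (he : e ∈ G.arcs) (hte : G.tgt e = v) :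
    {l : List ℕ | IsWalk G l u v ∧ l.getLast? = some e}
      = (fun l => l ++ [e]) '' {l : List ℕ | IsWalk G l u (G.src e)} := by
  ext l
  constructor
  · rintro ⟨hw, hlast⟩
    rcases List.eq_nil_or_concat l with rfl | ⟨l', a, rfl⟩
    · exact absurd hw.1 hne
    · rw [List.concat_eq_append] at hw hlast ⊢
      rw [List.getLast?_concat] at hlast
      obtain rfl : a = e := by injection hlast
      exact ⟨l', ((walk_concat_iff hsrc htgt).1 hw).1, rfl⟩
  · rintro ⟨l', hw, rfl⟩
    exact ⟨(walk_concat_iff hsrc htgt).2 ⟨hw, he, hte⟩, List.getLast?_concat⟩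

theorem nPaths_one_in (G : Net) (hG : IsPhylo G) {u v e : ℕ} (hne : u ≠ v)
    (he : e ∈ G.arcs) (hte : G.tgt e = v)
    (huniq : ∀ a ∈ G.arcs, G.tgt a = v → a = e) :
    nPaths G u v = nPaths G u (G.src e) := by
  have hset : {l : List ℕ | IsWalk G l u v}
      = (fun l => l ++ [e]) '' {l : List ℕ | IsWalk G l u (G.src e)} := by
    rw [← walkSet_target G hG.src_mem hG.tgt_mem hne he hte]
    ext l
    simp only [Set.mem_setOf_eq]
    refine ⟨fun hw => ⟨hw, ?_⟩, fun h => h.1⟩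
    rcases List.eq_nil_or_concat l with rfl | ⟨l', a, rfl⟩
    · exact absurd hw.1 hne
    · rw [List.concat_eq_append] at hw ⊢
      rw [List.getLast?_concat]
      have hwa := ((walk_concat_iff hG.src_mem hG.tgt_mem).1 hw).2
      rw [huniq a hwa.1 hwa.2]
  have hinj : Function.Injective (fun l : List ℕ => l ++ [e]) := fun l1 l2 h => by
    simpa using h
  rw [nPaths, nPaths, hset, Set.ncard_image_of_injective _ hinj]

theorem nPaths_two_in (G : Net) (hG : IsPhylo G) {u v e f : ℕ} (hne : u ≠ v)
    (hef : e ≠ f) (he : e ∈ G.arcs) (hte : G.tgt e = v)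
    (hf : f ∈ G.arcs) (htf : G.tgt f = v)
    (huniq : ∀ a ∈ G.arcs, G.tgt a = v → a = e ∨ a = f) :
    nPaths G u v = nPaths G u (G.src e) + nPaths G u (G.src f) := by
  have hsete := walkSet_target G hG.src_mem hG.tgt_mem hne he hte
  have hsetf := walkSet_target G hG.src_mem hG.tgt_mem hne hf htf
  have hset : {l : List ℕ | IsWalk G l u v}
      = (fun l => l ++ [e]) '' {l : List ℕ | IsWalk G l u (G.src e)}
        ∪ (fun l => l ++ [f]) '' {l : List ℕ | IsWalk G l u (G.src f)} := by
    rw [← hsete, ← hsetf]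
    ext l
    simp only [Set.mem_setOf_eq, Set.mem_union]
    constructor
    · intro hw
      rcases List.eq_nil_or_concat l with rfl | ⟨l', a, rfl⟩
      · exact absurd hw.1 hne
      · rw [List.concat_eq_append] at hw ⊢
        have hwa := ((walk_concat_iff hG.src_mem hG.tgt_mem).1 hw).2
        rcases huniq a hwa.1 hwa.2 with rfl | rfl
        · exact Or.inl ⟨hw, List.getLast?_concat⟩
        · exact Or.inr ⟨hw, List.getLast?_concat⟩
    · rintro (⟨hw, _⟩ | ⟨hw, _⟩) <;> exact hw
  have hdisj : Disjoint ((fun l => l ++ [e]) '' {l : List ℕ | IsWalk G l u (G.src e)})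
      ((fun l => l ++ [f]) '' {l : List ℕ | IsWalk G l u (G.src f)}) := by
    rw [Set.disjoint_left]
    rintro l ⟨l1, _, rfl⟩ ⟨l2, _, heq⟩
    have h0 := congrArg List.getLast? heq
    rw [List.getLast?_concat, List.getLast?_concat] at h0
    exact hef (Option.some_injective _ h0).symm
  have hfe : {l : List ℕ | IsWalk G l u (G.src e)}.Finite :=
    walk_finite hG.src_mem hG.acyclic u _
  have hff : {l : List ℕ | IsWalk G l u (G.src f)}.Finite :=
    walk_finite hG.src_mem hG.acyclic u _
  have hinje : Function.Injective (fun l : List ℕ => l ++ [e]) := fun l1 l2 h => by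
    simpa using h
  have hinjf : Function.Injective (fun l : List ℕ => l ++ [f]) := fun l1 l2 h => by
    simpa using h
  rw [nPaths, nPaths, nPaths, hset,
    Set.ncard_union_eq hdisj (hfe.image _) (hff.image _),
    Set.ncard_image_of_injective _ hinje, Set.ncard_image_of_injective _ hinjf]

/-! ### Infrastructure: transfer of walks under local surgery -/

/-- In `G'`, once a walk enters the region `R` (closed under out-arcs), it stays
in `R` and the rank `ρ` does not decrease. -/
theorem walk_stay {G' : Net} {R : Set ℕ} {ρ : ℕ → ℕ}
    (hclos : ∀ a ∈ G'.arcs, G'.src a ∈ R → G'.tgt a ∈ R ∧ ρ (G'.src a) < ρ (G'.tgt a))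
    {l : List ℕ} {x w : ℕ} (h : IsWalk G' l x w) (hx : x ∈ R) :
    w ∈ R ∧ ρ x ≤ ρ w := by
  induction l generalizing x with
  | nil => obtain ⟨rfl, _⟩ := h; exact ⟨hx, le_rfl⟩
  | cons a t ih =>
    obtain ⟨ha, rfl, hw⟩ := h
    obtain ⟨h1, h2⟩ := hclos a ha hx
    obtain ⟨h3, h4⟩ := ih hw h1
    exact ⟨h3, le_of_lt (lt_of_lt_of_le h2 h4)⟩

/-- An arc of `G'` "behaves like `G`". -/
def GoodArc (G G' : Net) (a : ℕ) : Prop :=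
  a ∈ G.arcs ∧ G'.src a = G.src a ∧ G'.tgt a = G.tgt a

theorem walk_transfer {G G' : Net} (hG : IsPhylo G) {R D : Set ℕ} {ρ : ℕ → ℕ}
    (harcs : G.arcs ⊆ G'.arcs)
    (hclos : ∀ a ∈ G'.arcs, G'.src a ∈ R → G'.tgt a ∈ R ∧ ρ (G'.src a) < ρ (G'.tgt a))
    (hbad : ∀ a ∈ G'.arcs, ¬ GoodArc G G' a → G'.tgt a ∈ R)
    (hmodD : ∀ a ∈ G.arcs, ¬ GoodArc G G' a → G.tgt a ∈ D)
    (hD : ∀ a ∈ G.arcs, G.src a ∉ D)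
    {w : ℕ} (hwv : w ∈ G.verts) (hwv' : w ∈ G'.verts) (hwR : w ∉ R) (hwD : w ∉ D) :
    ∀ l u, IsWalk G' l u w ↔ IsWalk G l u w := by
  intro l
  induction l with
  | nil => intro u; constructor <;> (rintro ⟨rfl, _⟩; exact ⟨rfl, by assumption⟩)
  | cons a t ih =>
    intro u
    constructor
    · rintro ⟨ha, rfl, hw⟩
      by_cases hgood : GoodArc G G' a
      · obtain ⟨ha0, hs0, ht0⟩ := hgood
        exact ⟨ha0, hs0.symm, (ih _).1 (ht0 ▸ hw)⟩
      · exact absurd ((walk_stay hclos hw (hbad a ha hgood)).1) hwR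
    · rintro ⟨ha, rfl, hw⟩
      by_cases hgood : GoodArc G G' a
      · obtain ⟨_, hs0, ht0⟩ := hgood
        exact ⟨harcs ha, hs0, ht0 ▸ (ih _).2 hw⟩
      · -- the walk in `G` continues from `G.tgt a ∈ D`, but no arc of `G`
        -- starts in `D`, so `w = G.tgt a ∈ D`, contradiction
        have htD := hmodD a ha hgood
        cases t with
        | nil => obtain ⟨rfl, _⟩ := hw; exact absurd htD hwD
        | cons b s =>
          obtain ⟨hb, hsb, _⟩ := hw
          exact absurd (hsb ▸ htD) (hD b hb)

theorem nPaths_transfer {G G' : Net} (hG : IsPhylo G) {R D : Set ℕ} {ρ : ℕ → ℕ}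
    (harcs : G.arcs ⊆ G'.arcs)
    (hclos : ∀ a ∈ G'.arcs, G'.src a ∈ R → G'.tgt a ∈ R ∧ ρ (G'.src a) < ρ (G'.tgt a))
    (hbad : ∀ a ∈ G'.arcs, ¬ GoodArc G G' a → G'.tgt a ∈ R)
    (hmodD : ∀ a ∈ G.arcs, ¬ GoodArc G G' a → G.tgt a ∈ D)
    (hD : ∀ a ∈ G.arcs, G.src a ∉ D)
    {w : ℕ} (hwv : w ∈ G.verts) (hwv' : w ∈ G'.verts) (hwR : w ∉ R) (hwD : w ∉ D)
    (u : ℕ) : nPaths G' u w = nPaths G u w := by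
  unfold nPaths
  congr 1
  ext l
  exact walk_transfer hG harcs hclos hbad hmodD hD hwv hwv' hwR hwD l u

theorem acyclic_transfer {G G' : Net} (hG : IsPhylo G) {R : Set ℕ} {ρ : ℕ → ℕ}
    (harcs : G.arcs ⊆ G'.arcs)
    (hclos : ∀ a ∈ G'.arcs, G'.src a ∈ R → G'.tgt a ∈ R ∧ ρ (G'.src a) < ρ (G'.tgt a))
    (hbad : ∀ a ∈ G'.arcs, ¬ GoodArc G G' a → G'.tgt a ∈ R) :
    ∀ (v : ℕ) (l : List ℕ), l ≠ [] → ¬ IsWalk G' l v v := by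
  intro v l hl hw
  by_cases hall : ∀ a ∈ l, GoodArc G G' a
  · -- the walk is a walk in `G`
    have hGwalk : ∀ (t : List ℕ) (x : ℕ), (∀ a ∈ t, GoodArc G G' a) →
        IsWalk G' t x v → v ∈ G.verts → IsWalk G t x v := by
      intro t
      induction t with
      | nil => rintro x _ ⟨rfl, _⟩ hv; exact ⟨rfl, hv⟩
      | cons a s ih =>
        rintro x hgood ⟨ha, rfl, hw⟩ hv
        obtain ⟨ha0, hs0, ht0⟩ := hgood a (List.mem_cons_self)
        exact ⟨ha0, hs0.symm, ht0 ▸ ih _ (fun b hb => hgood b (List.mem_cons_of_mem a hb))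
          (ht0 ▸ hw) hv⟩
    cases l with
    | nil => exact hl rfl
    | cons a s =>
      have hva : v ∈ G.verts := by
        obtain ⟨ha, hsa, _⟩ := hw
        obtain ⟨ha0, hs0, _⟩ := hall a (List.mem_cons_self)
        exact hsa ▸ hs0 ▸ hG.src_mem a ha0
      exact hG.acyclic v (a :: s) hl (hGwalk (a :: s) v hall hw hva)
  · push_neg at hall
    obtain ⟨a, hal, hbada⟩ := hall
    obtain ⟨s1, s2, rfl⟩ := List.append_of_mem hal
    have hwsuf := walk_split_cons hw
    obtain ⟨ha', _, hw2⟩ := hwsuf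
    have hvR : v ∈ R := (walk_stay hclos hw2 (hbad a ha' hbada)).1
    cases hl' : s1 ++ a :: s2 with
    | nil => simp at hl'
    | cons b t =>
      rw [hl'] at hw
      obtain ⟨hb, hsb, hwb⟩ := hw
      have h1 := hclos b hb (hsb ▸ hvR)
      have h2 := walk_stay hclos hwb h1.1
      rw [hsb] at h1
      omega
/-! ### Infrastructure: degree bookkeeping -/

theorem card_filter_union2 {s : Finset ℕ} {b1 b2 : ℕ} (p : ℕ → Prop) [DecidablePred p]
    (h1 : b1 ∉ s) (h2 : b2 ∉ s) (h12 : b1 ≠ b2) :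
    ((s ∪ {b1, b2}).filter p).card
      = (s.filter p).card + ((if p b1 then 1 else 0) + (if p b2 then 1 else 0)) := by
  rw [Finset.filter_union, Finset.card_union_of_disjoint]
  · congr 1
    rw [show ({b1, b2} : Finset ℕ) = {b1} ∪ {b2} by rfl, Finset.filter_union]
    rw [Finset.card_union_of_disjoint]
    · rw [Finset.filter_singleton, Finset.filter_singleton]
      split_ifs <;> simp
    · simp only [Finset.disjoint_left, Finset.mem_filter, Finset.mem_singleton]
      rintro a ⟨rfl, _⟩ ⟨h, _⟩
      exact h12 h
  · simp only [Finset.disjoint_left, Finset.mem_filter, Finset.mem_insert,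
      Finset.mem_singleton]
    rintro a ⟨ha, _⟩ ⟨h, _⟩
    rcases h with rfl | rfl
    · exact h1 ha
    · exact h2 ha

theorem card_filter_union3 {s : Finset ℕ} {b1 b2 b3 : ℕ} (p : ℕ → Prop) [DecidablePred p]
    (h1 : b1 ∉ s) (h2 : b2 ∉ s) (h3 : b3 ∉ s) (h12 : b1 ≠ b2) (h13 : b1 ≠ b3)
    (h23 : b2 ≠ b3) :
    ((s ∪ {b1, b2, b3}).filter p).card
      = (s.filter p).card +
        ((if p b1 then 1 else 0) + (if p b2 then 1 else 0) + (if p b3 then 1 else 0)) := by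
  rw [Finset.filter_union, Finset.card_union_of_disjoint]
  · congr 1
    rw [Finset.filter_insert, Finset.filter_insert, Finset.filter_singleton]
    have hm1 : b1 ∉ ({b2, b3} : Finset ℕ) := by simp [h12, h13]
    have hm2 : b2 ∉ ({b3} : Finset ℕ) := by simp [h23]
    split_ifs <;>
      simp_all [Finset.card_insert_of_notMem, Finset.mem_insert, Finset.mem_singleton] <;>
      omega
  · simp only [Finset.disjoint_left, Finset.mem_filter, Finset.mem_insert,
      Finset.mem_singleton]
    rintro a ⟨ha, _⟩ ⟨h, _⟩
    rcases h with rfl | rfl | rfl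
    · exact h1 ha
    · exact h2 ha
    · exact h3 ha

theorem card_filter_congr {s : Finset ℕ} (p q : ℕ → Prop) [DecidablePred p]
    [DecidablePred q] (h : ∀ a ∈ s, p a ↔ q a) :
    (s.filter p).card = (s.filter q).card := by
  congr 1
  exact Finset.filter_congr (by simpa using h)

theorem card_filter_split_one {s : Finset ℕ} {az : ℕ} (p q : ℕ → Prop) [DecidablePred p]
    [DecidablePred q] (haz : az ∈ s) (h : ∀ a ∈ s, a ≠ az → (p a ↔ q a)) :
    (s.filter p).card = ((s.erase az).filter q).card + (if p az then 1 else 0) := by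
  conv_lhs => rw [← Finset.insert_erase haz]
  rw [Finset.filter_insert]
  have hcongr : (s.erase az).filter p = (s.erase az).filter q :=
    Finset.filter_congr (fun a ha => by
      simpa using h a (Finset.mem_of_mem_erase ha) (Finset.ne_of_mem_erase ha))
  split_ifs
  · rw [Finset.card_insert_of_notMem (by simp), hcongr]
  · rw [hcongr]; omega

theorem outDeg_zero_no_src {G : Net} {v : ℕ} (h : outDeg G v = 0) :
    ∀ a ∈ G.arcs, G.src a ≠ v := by
  intro a ha hsa
  have : a ∈ G.arcs.filter fun b => G.src b = v := Finset.mem_filter.2 ⟨ha, hsa⟩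
  rw [Finset.card_eq_zero.1 h] at this
  simp at this

theorem inDeg_one_unique {G : Net} {v e : ℕ} (he : e ∈ G.arcs) (hte : G.tgt e = v)
    (h : inDeg G v = 1) : ∀ b ∈ G.arcs, G.tgt b = v → b = e := by
  intro b hb htb
  obtain ⟨x, hx⟩ := Finset.card_eq_one.1 h
  have h1 : e ∈ G.arcs.filter fun a => G.tgt a = v := Finset.mem_filter.2 ⟨he, hte⟩
  have h2 : b ∈ G.arcs.filter fun a => G.tgt a = v := Finset.mem_filter.2 ⟨hb, htb⟩
  rw [hx, Finset.mem_singleton] at h1 h2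
  rw [h1, h2]

theorem inDeg_zero_fresh {G : Net} {y : ℕ} (htm : ∀ a ∈ G.arcs, G.tgt a ∈ G.verts)
    (hy : y ∉ G.verts) : inDeg G y = 0 := by
  rw [inDeg, Finset.card_eq_zero, Finset.filter_eq_empty_iff]
  intro a ha h
  exact hy (h ▸ htm a ha)

theorem outDeg_zero_fresh {G : Net} {y : ℕ} (hsm : ∀ a ∈ G.arcs, G.src a ∈ G.verts)
    (hy : y ∉ G.verts) : outDeg G y = 0 := by
  rw [outDeg, Finset.card_eq_zero, Finset.filter_eq_empty_iff]
  intro a ha h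
  exact hy (h ▸ hsm a ha)

theorem leaf_in_arc {G : Net} {v : ℕ} (h : IsLeafN G v) :
    ∃ e ∈ G.arcs, G.tgt e = v := by
  obtain ⟨_, h1, _⟩ := h
  obtain ⟨x, hx⟩ := Finset.card_eq_one.1 h1
  have : x ∈ G.arcs.filter fun a => G.tgt a = v := hx ▸ Finset.mem_singleton_self x
  exact ⟨x, (Finset.mem_filter.1 this).1, (Finset.mem_filter.1 this).2⟩
/-! ### Surgery 1: cherry expansion -/

theorem cherryExpand_realizes {R'' R' : LNet} {h : ℕ} {s : List ℕ}
    (hreal : RealizesL R'' (h :: s)) (hop : CherryExpandOp R'' R') :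
    RealizesL R' (h :: h :: s) := by
  obtain ⟨hphy, hleaf, hinj, hsurj, hcount⟩ := hreal
  obtain ⟨y1, y2, b1, b2, hy1, hy2, hyne, hb1, hb2, hbne, hverts, harcs, hold,
    hsb1, htb1, hsb2, htb2, hl0, hl1, hlrest⟩ := hop
  set G := R''.net with hG
  set G' := R'.net with hG'
  set x0 := R''.leaf 0 with hx0
  have hx0leaf : IsLeafN G x0 := hleaf 0 (by simp)
  have hx0v : x0 ∈ G.verts := hx0leaf.1
  -- degrees
  have hin : ∀ v, inDeg G' v
      = inDeg G v + ((if y1 = v then 1 else 0) + (if y2 = v then 1 else 0)) := by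
    intro v
    unfold inDeg
    rw [harcs, card_filter_union2 _ hb1 hb2 hbne, htb1, htb2]
    congr 1
    exact card_filter_congr _ _ (fun a ha => by rw [(hold a ha).2])
  have hout : ∀ v, outDeg G' v
      = outDeg G v + ((if x0 = v then 1 else 0) + (if x0 = v then 1 else 0)) := by
    intro v
    unfold outDeg
    rw [harcs, card_filter_union2 _ hb1 hb2 hbne, hsb1, hsb2]
    congr 1
    exact card_filter_congr _ _ (fun a ha => by rw [(hold a ha).1])
  have hinold : ∀ v ∈ G.verts, inDeg G' v = inDeg G v := by
    intro v hv
    rw [hin, if_neg (fun hh => hy1 (by rw [hh]; exact hv)),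
      if_neg (fun hh => hy2 (by rw [hh]; exact hv))]
    omega
  have houtold : ∀ v ∈ G.verts, v ≠ x0 → outDeg G' v = outDeg G v := by
    intro v _ hvx
    rw [hout, if_neg (fun hh => hvx hh.symm)]
    omega
  have houtx0 : outDeg G' x0 = 2 := by
    rw [hout, if_pos rfl, hx0leaf.2.2]
  have hinx0 : inDeg G' x0 = 1 := by rw [hinold x0 hx0v, hx0leaf.2.1]
  have hvx0y1 : x0 ≠ y1 := fun hh => hy1 (by rw [← hh]; exact hx0v)
  have hvx0y2 : x0 ≠ y2 := fun hh => hy2 (by rw [← hh]; exact hx0v)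
  have hiny1 : inDeg G' y1 = 1 := by
    rw [hin, inDeg_zero_fresh hphy.tgt_mem hy1, if_pos rfl, if_neg (Ne.symm hyne)]
  have hiny2 : inDeg G' y2 = 1 := by
    rw [hin, inDeg_zero_fresh hphy.tgt_mem hy2, if_pos rfl, if_neg hyne]
  have houty1 : outDeg G' y1 = 0 := by
    rw [hout, outDeg_zero_fresh hphy.src_mem hy1, if_neg hvx0y1]
  have houty2 : outDeg G' y2 = 0 := by
    rw [hout, outDeg_zero_fresh hphy.src_mem hy2, if_neg hvx0y2]
  have hvsub : G.verts ⊆ G'.verts := by rw [hverts]; exact Finset.subset_union_left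
  have hasub : G.arcs ⊆ G'.arcs := by rw [harcs]; exact Finset.subset_union_left
  have hy1v' : y1 ∈ G'.verts := by rw [hverts]; simp
  have hy2v' : y2 ∈ G'.verts := by rw [hverts]; simp
  -- arc case analysis
  have harc_cases : ∀ a ∈ G'.arcs, a ∈ G.arcs ∨ a = b1 ∨ a = b2 := by
    intro a ha
    rw [harcs] at ha
    rcases Finset.mem_union.1 ha with ha | ha
    · exact Or.inl ha
    · simp only [Finset.mem_insert, Finset.mem_singleton] at ha
      exact Or.inr ha
  have hgood : ∀ a ∈ G.arcs, GoodArc G G' a := fun a ha => ⟨ha, (hold a ha).1, (hold a ha).2⟩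
  -- transfer setup
  have hclos : ∀ a ∈ G'.arcs, G'.src a ∈ ({y1, y2} : Set ℕ) →
      G'.tgt a ∈ ({y1, y2} : Set ℕ) ∧ (0:ℕ) < 0 := by
    intro a ha hsa
    exfalso
    rcases harc_cases a ha with ha' | rfl | rfl
    · rw [(hold a ha').1] at hsa
      rcases hsa with hh | hh
      · exact hy1 (hh ▸ hphy.src_mem a ha')
      · exact hy2 (hh ▸ hphy.src_mem a ha')
    · rw [hsb1] at hsa
      rcases hsa with hh | hh
      · exact hvx0y1 hh
      · exact hvx0y2 hh
    · rw [hsb2] at hsa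
      rcases hsa with hh | hh
      · exact hvx0y1 hh
      · exact hvx0y2 hh
  have hbad : ∀ a ∈ G'.arcs, ¬ GoodArc G G' a → G'.tgt a ∈ ({y1, y2} : Set ℕ) := by
    intro a ha hng
    rcases harc_cases a ha with ha' | rfl | rfl
    · exact absurd (hgood a ha') hng
    · rw [htb1]; exact Or.inl rfl
    · rw [htb2]; exact Or.inr rfl
  have hmodD : ∀ a ∈ G.arcs, ¬ GoodArc G G' a → G.tgt a ∈ (∅ : Set ℕ) := by
    intro a ha hng; exact absurd (hgood a ha) hng
  have hD : ∀ a ∈ G.arcs, G.src a ∉ (∅ : Set ℕ) := fun a _ => Set.notMem_empty _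
  have htrans : ∀ w ∈ G.verts, ∀ u, nPaths G' u w = nPaths G u w := by
    intro w hw u
    exact nPaths_transfer (ρ := fun _ => 0) hphy hasub hclos hbad hmodD hD hw (hvsub hw)
      (by rintro (hh | hh); exacts [hy1 (hh ▸ hw), hy2 (hh ▸ hw)])
      (Set.notMem_empty _) u
  -- roots
  have hroot_iff : ∀ r, IsRootN G' r ↔ IsRootN G r := by
    intro r
    constructor
    · rintro ⟨hrv, hrin⟩
      rw [hverts] at hrv
      rcases Finset.mem_union.1 hrv with hrv | hrv
      · exact ⟨hrv, by rw [← hinold r hrv]; exact hrin⟩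
      · exfalso
        simp only [Finset.mem_insert, Finset.mem_singleton] at hrv
        rcases hrv with rfl | rfl
        · rw [hiny1] at hrin; omega
        · rw [hiny2] at hrin; omega
    · rintro ⟨hrv, hrin⟩
      exact ⟨hvsub hrv, by rw [hinold r hrv]; exact hrin⟩
  have hphy' : IsPhylo G' := by
    constructor
    · intro a ha
      rcases harc_cases a ha with ha' | rfl | rfl
      · rw [(hold a ha').1]; exact hvsub (hphy.src_mem a ha')
      · rw [hsb1]; exact hvsub hx0v
      · rw [hsb2]; exact hvsub hx0v
    · intro a ha
      rcases harc_cases a ha with ha' | rfl | rfl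
      · rw [(hold a ha').2]; exact hvsub (hphy.tgt_mem a ha')
      · rw [htb1]; exact hy1v'
      · rw [htb2]; exact hy2v'
    · intro a ha
      rcases harc_cases a ha with ha' | rfl | rfl
      · rw [(hold a ha').1, (hold a ha').2]; exact hphy.no_loop a ha'
      · rw [hsb1, htb1]; exact hvx0y1
      · rw [hsb2, htb2]; exact hvx0y2
    · exact acyclic_transfer (ρ := fun _ => 0) hphy hasub hclos hbad
    · obtain ⟨r, hr, hru⟩ := hphy.root_exu
      exact ⟨r, (hroot_iff r).2 hr, fun r' hr' => hru r' ((hroot_iff r').1 hr')⟩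
    · intro r hr
      have hrG := (hroot_iff r).1 hr
      have hrx0 : r ≠ x0 := by
        intro hh
        have := hrG.2
        rw [hh, hx0leaf.2.1] at this
        omega
      rw [houtold r hrG.1 hrx0]
      exact hphy.root_out r hrG
    · intro v hv
      rw [hverts] at hv
      rcases Finset.mem_union.1 hv with hv | hv
      · have hv' := hvsub hv
        rcases hphy.types v hv with hh | hh | hh | hh
        · exact Or.inl ⟨hv', by rw [hinold v hv]; exact hh.2⟩
        · by_cases hvx : v = x0
          · subst hvx
            exact Or.inr (Or.inr (Or.inl ⟨hv', hinx0, houtx0⟩))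
          · exact Or.inr (Or.inl ⟨hv', by rw [hinold v hv]; exact hh.2.1,
              by rw [houtold v hv hvx]; exact hh.2.2⟩)
        · have hvx : v ≠ x0 := by
            intro hh'
            have := hh.2.2
            rw [hh', hx0leaf.2.2] at this
            omega
          exact Or.inr (Or.inr (Or.inl ⟨hv', by rw [hinold v hv]; exact hh.2.1,
            by rw [houtold v hv hvx]; exact hh.2.2⟩))
        · have hvx : v ≠ x0 := by
            intro hh'
            have := hh.2.2
            rw [hh', hx0leaf.2.2] at this
            omega
          exact Or.inr (Or.inr (Or.inr ⟨hv', by rw [hinold v hv]; exact hh.2.1,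
            by rw [houtold v hv hvx]; exact hh.2.2⟩))
      · simp only [Finset.mem_insert, Finset.mem_singleton] at hv
        rcases hv with rfl | rfl
        · exact Or.inr (Or.inl ⟨hy1v', hiny1, houty1⟩)
        · exact Or.inr (Or.inl ⟨hy2v', hiny2, houty2⟩)
  -- leaves of G'
  have hleafy1 : IsLeafN G' y1 := ⟨hy1v', hiny1, houty1⟩
  have hleafy2 : IsLeafN G' y2 := ⟨hy2v', hiny2, houty2⟩
  have hleafold : ∀ w, IsLeafN G w → w ≠ x0 → IsLeafN G' w := by
    intro w hw hwx
    exact ⟨hvsub hw.1, by rw [hinold w hw.1]; exact hw.2.1,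
      by rw [houtold w hw.1 hwx]; exact hw.2.2⟩
  have hlen : (h :: s).length = s.length + 1 := rfl
  have hmap : ∀ k, R'.leaf (k + 2) = R''.leaf (k + 1) := fun k => hlrest (k + 1) (by omega)
  refine ⟨hphy', ?_, ?_, ?_, ?_⟩
  · -- leaves
    intro i hi
    match i with
    | 0 => rw [hl0]; exact hleafy1
    | 1 => rw [hl1]; exact hleafy2
    | (k+2) =>
      rw [hmap k]
      have hk : k + 1 < (h :: s).length := by simp at hi ⊢; omega
      refine hleafold _ (hleaf (k+1) hk) ?_
      intro hh
      have := hinj (k+1) 0 hk (by simp) hh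
      omega
  · -- injectivity
    intro i j hi hj hij
    have hlt : ∀ k : ℕ, k + 2 < (h :: h :: s).length → k + 1 < (h :: s).length := by
      intro k hk; simp at hk ⊢; omega
    match i, j with
    | 0, 0 => rfl
    | 1, 1 => rfl
    | 0, 1 => rw [hl0, hl1] at hij; exact absurd hij hyne
    | 1, 0 => rw [hl0, hl1] at hij; exact absurd hij.symm hyne
    | 0, (k+2) =>
      rw [hl0, hmap k] at hij
      exact absurd (hleaf (k+1) (hlt k hj)).1 (by rw [← hij]; exact hy1)
    | 1, (k+2) =>
      rw [hl1, hmap k] at hij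
      exact absurd (hleaf (k+1) (hlt k hj)).1 (by rw [← hij]; exact hy2)
    | (k+2), 0 =>
      rw [hl0, hmap k] at hij
      exact absurd (hleaf (k+1) (hlt k hi)).1 (by rw [hij]; exact hy1)
    | (k+2), 1 =>
      rw [hl1, hmap k] at hij
      exact absurd (hleaf (k+1) (hlt k hi)).1 (by rw [hij]; exact hy2)
    | (k+2), (j+2) =>
      rw [hmap k, hmap j] at hij
      have := hinj (k+1) (j+1) (hlt k hi) (hlt j hj) hij
      omega
  · -- surjectivity
    intro v hv
    have hvmem := hv.1
    rw [hverts] at hvmem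
    rcases Finset.mem_union.1 hvmem with hvm | hvm
    · have hvx : v ≠ x0 := by
        intro hh
        have := hv.2.2
        rw [hh, houtx0] at this
        omega
      have hvleaf : IsLeafN G v :=
        ⟨hvm, by rw [← hinold v hvm]; exact hv.2.1, by rw [← houtold v hvm hvx]; exact hv.2.2⟩
      obtain ⟨i, hi, hiv⟩ := hsurj v hvleaf
      have hi0 : i ≠ 0 := fun hh => hvx (by rw [← hiv, hh])
      refine ⟨i + 1, by simp at hi ⊢; omega, ?_⟩
      rw [hlrest i (by omega), hiv]
    · simp only [Finset.mem_insert, Finset.mem_singleton] at hvm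
      rcases hvm with rfl | rfl
      · exact ⟨0, by simp, hl0⟩
      · exact ⟨1, by simp, hl1⟩
  · -- path counts
    intro i hi r hr
    have hrG : IsRootN G r := (hroot_iff r).1 hr
    have hrv : r ∈ G.verts := hrG.1
    have hcount0 := hcount 0 (by simp) r hrG
    have harcb1 : b1 ∈ G'.arcs := by rw [harcs]; simp
    have harcb2 : b2 ∈ G'.arcs := by rw [harcs]; simp
    have huniq1 : ∀ a ∈ G'.arcs, G'.tgt a = y1 → a = b1 := by
      intro a ha hta
      rcases harc_cases a ha with ha' | rfl | rfl
      · rw [(hold a ha').2] at hta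
        exact absurd (hta ▸ hphy.tgt_mem a ha') hy1
      · rfl
      · rw [htb2] at hta; exact absurd hta.symm hyne
    have huniq2 : ∀ a ∈ G'.arcs, G'.tgt a = y2 → a = b2 := by
      intro a ha hta
      rcases harc_cases a ha with ha' | rfl | rfl
      · rw [(hold a ha').2] at hta
        exact absurd (hta ▸ hphy.tgt_mem a ha') hy2
      · rw [htb1] at hta; exact absurd hta hyne
      · rfl
    match i with
    | 0 =>
      rw [hl0]
      have := nPaths_one_in G' hphy' (fun hh : r = y1 => hy1 (by rw [← hh]; exact hrv)) harcb1 htb1 huniq1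
      rw [this, hsb1, htrans x0 hx0v r]
      simpa using hcount0
    | 1 =>
      rw [hl1]
      have := nPaths_one_in G' hphy' (fun hh : r = y2 => hy2 (by rw [← hh]; exact hrv)) harcb2 htb2 huniq2
      rw [this, hsb2, htrans x0 hx0v r]
      simpa using hcount0
    | (k+2) =>
      rw [hmap k]
      have hk : k + 1 < (h :: s).length := by simp at hi ⊢; omega
      rw [show nPaths R'.net r (R''.leaf (k+1)) = nPaths G' r (R''.leaf (k+1)) from rfl,
        htrans _ (hleaf (k+1) hk).1 r]
      have := hcount (k+1) hk r hrG
      simpa using this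
/-! ### Surgery 2: adding an arc between subdivision vertices -/

theorem addArc_realizes {R'' R' : LNet} {p q : ℕ} {s : List ℕ}
    (hreal : RealizesL R'' (p :: q :: s)) (hop : AddArcOp R'' R') :
    RealizesL R' ((p + q) :: q :: s) := by
  obtain ⟨hphy, hleaf, hinj, hsurj, hcount⟩ := hreal
  obtain ⟨u, v, a0, a1, b0, b1, c, hu, hv, huv, ha0, hta0, ha1, hta1, ha01,
    hb0, hb1, hc, hb01, hb0c, hb1c, hverts, harcs, hold, hsa0, hta0', hsa1, hta1',
    hsb0, htb0, hsb1, htb1, hsc, htc, hlf⟩ := hop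
  set G := R''.net with hG
  set G' := R'.net with hG'
  set x0 := R''.leaf 0 with hx0
  set x1 := R''.leaf 1 with hx1
  have hx0leaf : IsLeafN G x0 := hleaf 0 (by simp)
  have hx1leaf : IsLeafN G x1 := hleaf 1 (by simp)
  have hx01 : x0 ≠ x1 := fun hh => by
    have := hinj 0 1 (by simp) (by simp) hh
    omega
  have hx0v : x0 ∈ G.verts := hx0leaf.1
  have hx1v : x1 ∈ G.verts := hx1leaf.1
  have hux0 : u ≠ x0 := fun hh => hu (hh ▸ hx0v)
  have hux1 : u ≠ x1 := fun hh => hu (hh ▸ hx1v)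
  have hvx0 : v ≠ x0 := fun hh => hv (hh ▸ hx0v)
  have hvx1 : v ≠ x1 := fun hh => hv (hh ▸ hx1v)
  have huniq0 : ∀ b ∈ G.arcs, G.tgt b = x0 → b = a0 := inDeg_one_unique ha0 hta0 hx0leaf.2.1
  have huniq1 : ∀ b ∈ G.arcs, G.tgt b = x1 → b = a1 := inDeg_one_unique ha1 hta1 hx1leaf.2.1
  have hnox0 : ∀ a ∈ G.arcs, G.src a ≠ x0 := outDeg_zero_no_src hx0leaf.2.2
  have hnox1 : ∀ a ∈ G.arcs, G.src a ≠ x1 := outDeg_zero_no_src hx1leaf.2.2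
  set z0 := G.src a0 with hz0
  set z1 := G.src a1 with hz1
  have hz0v : z0 ∈ G.verts := hphy.src_mem a0 ha0
  have hz1v : z1 ∈ G.verts := hphy.src_mem a1 ha1
  have hvsub : G.verts ⊆ G'.verts := by rw [hverts]; exact Finset.subset_union_left
  have hasub : G.arcs ⊆ G'.arcs := by rw [harcs]; exact Finset.subset_union_left
  have harc_cases : ∀ a ∈ G'.arcs, a ∈ G.arcs ∨ a = b0 ∨ a = b1 ∨ a = c := by
    intro a ha
    rw [harcs] at ha
    rcases Finset.mem_union.1 ha with ha | ha
    · exact Or.inl ha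
    · simp only [Finset.mem_insert, Finset.mem_singleton] at ha
      exact Or.inr ha
  -- degrees: in-degree
  have ha1e : a1 ∈ G.arcs.erase a0 := Finset.mem_erase.2 ⟨fun hh => ha01 hh.symm, ha1⟩
  have hin : ∀ w, inDeg G' w =
      (((G.arcs.erase a0).erase a1).filter (fun a => G.tgt a = w)).card
        + ((if u = w then 1 else 0) + (if v = w then 1 else 0))
        + ((if x0 = w then 1 else 0) + (if x1 = w then 1 else 0) + (if u = w then 1 else 0)) := by
    intro w
    unfold inDeg
    rw [harcs, card_filter_union3 _ hb0 hb1 hc hb01 hb0c hb1c,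
      card_filter_split_one (fun a => G'.tgt a = w) (fun a => G'.tgt a = w) ha0
        (fun a _ _ => Iff.rfl),
      card_filter_split_one (fun a => G'.tgt a = w) (fun a => G.tgt a = w) ha1e
        (fun a hae hne =>
          (congrArg (fun x => x = w)
            (hold a (Finset.mem_of_mem_erase hae) (Finset.ne_of_mem_erase hae) hne).2).to_iff)]
    simp only [htb0, htb1, htc, hta0', hta1']
    ring
  have hbase : ∀ w, inDeg G w =
      (((G.arcs.erase a0).erase a1).filter (fun a => G.tgt a = w)).card
        + ((if x0 = w then 1 else 0) + (if x1 = w then 1 else 0)) := by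
    intro w
    unfold inDeg
    rw [card_filter_split_one (fun a => G.tgt a = w) (fun a => G.tgt a = w) ha0
        (fun a _ _ => Iff.rfl),
      card_filter_split_one (fun a => G.tgt a = w) (fun a => G.tgt a = w) ha1e
        (fun a _ _ => Iff.rfl)]
    simp only [hta0, hta1]
    ring
  have hbase0 : ∀ w, w ≠ x0 → w ≠ x1 →
      (((G.arcs.erase a0).erase a1).filter (fun a => G.tgt a = w)).card = inDeg G w := by
    intro w hw0 hw1
    have := hbase w
    rw [if_neg (fun hh => hw0 hh.symm), if_neg (fun hh => hw1 hh.symm)] at this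
    omega
  have hbasefresh : ∀ w, w ∉ G.verts →
      (((G.arcs.erase a0).erase a1).filter (fun a => G.tgt a = w)).card = 0 := by
    intro w hw
    rw [Finset.card_eq_zero, Finset.filter_eq_empty_iff]
    intro a ha hh
    exact hw (hh ▸ hphy.tgt_mem a (Finset.mem_of_mem_erase (Finset.mem_of_mem_erase ha)))
  have hbasex0 : (((G.arcs.erase a0).erase a1).filter (fun a => G.tgt a = x0)).card = 0 := by
    have := hbase x0
    rw [if_pos rfl, if_neg (fun hh : x1 = x0 => hx01 hh.symm), hx0leaf.2.1] at this
    omega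
  have hbasex1 : (((G.arcs.erase a0).erase a1).filter (fun a => G.tgt a = x1)).card = 0 := by
    have := hbase x1
    rw [if_neg hx01, if_pos rfl, hx1leaf.2.1] at this
    omega
  -- in-degree values
  have hinold : ∀ w ∈ G.verts, inDeg G' w = inDeg G w := by
    intro w hw
    have hwu : u = w → False := fun hh => hu (by rw [hh]; exact hw)
    have hwv : v = w → False := fun hh => hv (by rw [hh]; exact hw)
    by_cases hw0 : w = x0
    · subst hw0
      rw [hin, hbasex0, if_neg hwu, if_neg hwv, if_pos rfl,
        if_neg (fun hh : x1 = x0 => hx01 hh.symm), hx0leaf.2.1]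
    · by_cases hw1 : w = x1
      · subst hw1
        rw [hin, hbasex1, if_neg hwu, if_neg hwv, if_neg (fun hh : x0 = x1 => hx01 hh),
          if_pos rfl, hx1leaf.2.1]
      · rw [hin, hbase0 w hw0 hw1, if_neg hwu, if_neg hwv,
          if_neg (fun hh : x0 = w => hw0 hh.symm), if_neg (fun hh : x1 = w => hw1 hh.symm)]
        omega
  have hinu : inDeg G' u = 2 := by
    rw [hin, hbasefresh u hu, if_pos rfl, if_neg (Ne.symm huv),
      if_neg (fun hh : x0 = u => hux0 hh.symm), if_neg (fun hh : x1 = u => hux1 hh.symm)]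
  have hinv : inDeg G' v = 1 := by
    rw [hin, hbasefresh v hv, if_neg huv, if_pos rfl,
      if_neg (fun hh : x0 = v => hvx0 hh.symm), if_neg (fun hh : x1 = v => hvx1 hh.symm)]
  -- out-degree
  have hout : ∀ w, outDeg G' w = outDeg G w
      + ((if u = w then 1 else 0) + (if v = w then 1 else 0) + (if v = w then 1 else 0)) := by
    intro w
    have hcg : (G.arcs.filter (fun a => G'.src a = w)).card
        = (G.arcs.filter (fun a => G.src a = w)).card :=
      card_filter_congr _ _ (fun a ha => by
        by_cases h0 : a = a0
        · subst h0; exact (congrArg (fun x => x = w) hsa0).to_iff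
        · by_cases h1 : a = a1
          · subst h1; exact (congrArg (fun x => x = w) hsa1).to_iff
          · exact (congrArg (fun x => x = w) (hold a ha h0 h1).1).to_iff)
    unfold outDeg
    rw [harcs, card_filter_union3 _ hb0 hb1 hc hb01 hb0c hb1c]
    simp only [hsb0, hsb1, hsc]
    omega
  have houtold : ∀ w ∈ G.verts, outDeg G' w = outDeg G w := by
    intro w hw
    rw [hout, if_neg (fun hh : u = w => hu (by rw [hh]; exact hw)),
      if_neg (fun hh : v = w => hv (by rw [hh]; exact hw))]
    omega
  have houtu : outDeg G' u = 1 := by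
    rw [hout, outDeg_zero_fresh hphy.src_mem hu, if_pos rfl, if_neg (Ne.symm huv)]
  have houtv : outDeg G' v = 2 := by
    rw [hout, outDeg_zero_fresh hphy.src_mem hv, if_neg huv, if_pos rfl]
  -- transfer setup
  set R : Set ℕ := {u, v, x0, x1} with hR
  set ρ : ℕ → ℕ := fun w => if w = v then 0 else if w = u then 1 else 2 with hρ
  have hgoodold : ∀ a ∈ G.arcs, a ≠ a0 → a ≠ a1 → GoodArc G G' a :=
    fun a ha h0 h1 => ⟨ha, (hold a ha h0 h1).1, (hold a ha h0 h1).2⟩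
  have hvx0' : x0 ≠ v := fun hh => hvx0 hh.symm
  have hvx1' : x1 ≠ v := fun hh => hvx1 hh.symm
  have hux0' : x0 ≠ u := fun hh => hux0 hh.symm
  have hux1' : x1 ≠ u := fun hh => hux1 hh.symm
  have hρv : ρ v = 0 := by simp [hρ]
  have hρu : ρ u = 1 := by simp [hρ, huv]
  have hρx0 : ρ x0 = 2 := by simp [hρ, hvx0', hux0']
  have hρx1 : ρ x1 = 2 := by simp [hρ, hvx1', hux1']
  have hclos : ∀ a ∈ G'.arcs, G'.src a ∈ R → G'.tgt a ∈ R ∧ ρ (G'.src a) < ρ (G'.tgt a) := by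
    intro a ha hsa
    rcases harc_cases a ha with ha' | rfl | rfl | rfl
    · exfalso
      have hsrc' : G'.src a = G.src a := by
        by_cases h0 : a = a0
        · subst h0; exact hsa0
        · by_cases h1 : a = a1
          · subst h1; exact hsa1
          · exact (hold a ha' h0 h1).1
      rw [hsrc'] at hsa
      have hsv := hphy.src_mem a ha'
      rcases hsa with hh | hh | hh | hh
      · exact hu (hh ▸ hsv)
      · exact hv (hh ▸ hsv)
      · exact hnox0 a ha' hh
      · exact hnox1 a ha' hh
    · refine ⟨by rw [htb0]; exact Or.inr (Or.inr (Or.inl rfl)), ?_⟩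
      rw [hsb0, htb0, hρu, hρx0]
      omega
    · refine ⟨by rw [htb1]; exact Or.inr (Or.inr (Or.inr rfl)), ?_⟩
      rw [hsb1, htb1, hρv, hρx1]
      omega
    · refine ⟨by rw [htc]; exact Or.inl rfl, ?_⟩
      rw [hsc, htc, hρv, hρu]
      omega
  have hbad : ∀ a ∈ G'.arcs, ¬ GoodArc G G' a → G'.tgt a ∈ R := by
    intro a ha hng
    rcases harc_cases a ha with ha' | rfl | rfl | rfl
    · by_cases h0 : a = a0
      · subst h0; rw [hta0']; exact Or.inl rfl
      · by_cases h1 : a = a1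
        · subst h1; rw [hta1']; exact Or.inr (Or.inl rfl)
        · exact absurd (hgoodold a ha' h0 h1) hng
    · rw [htb0]; exact Or.inr (Or.inr (Or.inl rfl))
    · rw [htb1]; exact Or.inr (Or.inr (Or.inr rfl))
    · rw [htc]; exact Or.inl rfl
  set D : Set ℕ := {x0, x1} with hD0
  have hmodD : ∀ a ∈ G.arcs, ¬ GoodArc G G' a → G.tgt a ∈ D := by
    intro a ha hng
    by_cases h0 : a = a0
    · subst h0; rw [hta0]; exact Or.inl rfl
    · by_cases h1 : a = a1
      · subst h1; rw [hta1]; exact Or.inr rfl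
      · exact absurd (hgoodold a ha h0 h1) hng
  have hDno : ∀ a ∈ G.arcs, G.src a ∉ D := by
    rintro a ha (hh | hh)
    · exact hnox0 a ha hh
    · exact hnox1 a ha hh
  have htrans : ∀ w ∈ G.verts, w ≠ x0 → w ≠ x1 → ∀ r, nPaths G' r w = nPaths G r w := by
    intro w hw hw0 hw1 r
    refine nPaths_transfer (ρ := ρ) hphy hasub hclos hbad hmodD hDno hw (hvsub hw) ?_ ?_ r
    · rintro (hh | hh | hh | hh)
      · exact hu (hh ▸ hw)
      · exact hv (hh ▸ hw)
      · exact hw0 hh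
      · exact hw1 hh
    · rintro (hh | hh)
      · exact hw0 hh
      · exact hw1 hh
  -- roots
  have hroot_iff : ∀ r, IsRootN G' r ↔ IsRootN G r := by
    intro r
    constructor
    · rintro ⟨hrv, hrin⟩
      rw [hverts] at hrv
      rcases Finset.mem_union.1 hrv with hrv | hrv
      · exact ⟨hrv, by rw [← hinold r hrv]; exact hrin⟩
      · exfalso
        simp only [Finset.mem_insert, Finset.mem_singleton] at hrv
        rcases hrv with rfl | rfl
        · rw [hinu] at hrin; omega
        · rw [hinv] at hrin; omega
    · rintro ⟨hrv, hrin⟩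
      exact ⟨hvsub hrv, by rw [hinold r hrv]; exact hrin⟩
  have huv' : u ∈ G'.verts := by rw [hverts]; simp
  have hvv' : v ∈ G'.verts := by rw [hverts]; simp
  have hphy' : IsPhylo G' := by
    constructor
    · intro a ha
      rcases harc_cases a ha with ha' | rfl | rfl | rfl
      · by_cases h0 : a = a0
        · subst h0; rw [hsa0]; exact hvsub hz0v
        · by_cases h1 : a = a1
          · subst h1; rw [hsa1]; exact hvsub hz1v
          · rw [(hold a ha' h0 h1).1]; exact hvsub (hphy.src_mem a ha')
      · rw [hsb0]; exact huv'
      · rw [hsb1]; exact hvv'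
      · rw [hsc]; exact hvv'
    · intro a ha
      rcases harc_cases a ha with ha' | rfl | rfl | rfl
      · by_cases h0 : a = a0
        · subst h0; rw [hta0']; exact huv'
        · by_cases h1 : a = a1
          · subst h1; rw [hta1']; exact hvv'
          · rw [(hold a ha' h0 h1).2]; exact hvsub (hphy.tgt_mem a ha')
      · rw [htb0]; exact hvsub hx0v
      · rw [htb1]; exact hvsub hx1v
      · rw [htc]; exact huv'
    · intro a ha
      rcases harc_cases a ha with ha' | rfl | rfl | rfl
      · by_cases h0 : a = a0
        · subst h0; rw [hsa0, hta0']; exact fun hh => hu (hh ▸ hz0v)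
        · by_cases h1 : a = a1
          · subst h1; rw [hsa1, hta1']; exact fun hh => hv (hh ▸ hz1v)
          · rw [(hold a ha' h0 h1).1, (hold a ha' h0 h1).2]; exact hphy.no_loop a ha'
      · rw [hsb0, htb0]; exact fun hh => hu (hh ▸ hx0v)
      · rw [hsb1, htb1]; exact fun hh => hv (hh ▸ hx1v)
      · rw [hsc, htc]; exact Ne.symm huv
    · exact acyclic_transfer (ρ := ρ) hphy hasub hclos hbad
    · obtain ⟨r, hr, hru⟩ := hphy.root_exu
      exact ⟨r, (hroot_iff r).2 hr, fun r' hr' => hru r' ((hroot_iff r').1 hr')⟩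
    · intro r hr
      have hrG := (hroot_iff r).1 hr
      rw [houtold r hrG.1]
      exact hphy.root_out r hrG
    · intro w hw
      rw [hverts] at hw
      rcases Finset.mem_union.1 hw with hw | hw
      · have hw' := hvsub hw
        rcases hphy.types w hw with hh | hh | hh | hh
        · exact Or.inl ⟨hw', by rw [hinold w hw]; exact hh.2⟩
        · exact Or.inr (Or.inl ⟨hw', by rw [hinold w hw]; exact hh.2.1,
            by rw [houtold w hw]; exact hh.2.2⟩)
        · exact Or.inr (Or.inr (Or.inl ⟨hw', by rw [hinold w hw]; exact hh.2.1,
            by rw [houtold w hw]; exact hh.2.2⟩))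
        · exact Or.inr (Or.inr (Or.inr ⟨hw', by rw [hinold w hw]; exact hh.2.1,
            by rw [houtold w hw]; exact hh.2.2⟩))
      · simp only [Finset.mem_insert, Finset.mem_singleton] at hw
        rcases hw with rfl | rfl
        · exact Or.inr (Or.inr (Or.inr ⟨huv', hinu, houtu⟩))
        · exact Or.inr (Or.inr (Or.inl ⟨hvv', hinv, houtv⟩))
  -- leaves are unchanged
  have hleaf_iff : ∀ w, IsLeafN G' w ↔ IsLeafN G w := by
    intro w
    constructor
    · rintro ⟨hwv, hwin, hwout⟩
      rw [hverts] at hwv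
      rcases Finset.mem_union.1 hwv with hwv | hwv
      · exact ⟨hwv, by rw [← hinold w hwv]; exact hwin, by rw [← houtold w hwv]; exact hwout⟩
      · exfalso
        simp only [Finset.mem_insert, Finset.mem_singleton] at hwv
        rcases hwv with rfl | rfl
        · rw [houtu] at hwout; omega
        · rw [hinv] at hwin; omega
    · rintro ⟨hwv, hwin, hwout⟩
      exact ⟨hvsub hwv, by rw [hinold w hwv]; exact hwin, by rw [houtold w hwv]; exact hwout⟩
  have hlen : ((p + q) :: q :: s).length = (p :: q :: s).length := rfl
  refine ⟨hphy', ?_, ?_, ?_, ?_⟩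
  · intro i hi
    rw [hlf i]
    exact (hleaf_iff _).2 (hleaf i (by simpa using hi))
  · intro i j hi hj hij
    rw [hlf i, hlf j] at hij
    exact hinj i j (by simpa using hi) (by simpa using hj) hij
  · intro w hw
    obtain ⟨i, hi, hiv⟩ := hsurj w ((hleaf_iff w).1 hw)
    exact ⟨i, by simpa using hi, by rw [hlf i]; exact hiv⟩
  · intro i hi r hr
    have hrG : IsRootN G r := (hroot_iff r).1 hr
    have hrv : r ∈ G.verts := hrG.1
    have hrx0 : r ≠ x0 := fun hh => by
      have := hrG.2; rw [hh, hx0leaf.2.1] at this; omega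
    have hrx1 : r ≠ x1 := fun hh => by
      have := hrG.2; rw [hh, hx1leaf.2.1] at this; omega
    have hb0m : b0 ∈ G'.arcs := by rw [harcs]; simp
    have hb1m : b1 ∈ G'.arcs := by rw [harcs]; simp
    have hcm : c ∈ G'.arcs := by rw [harcs]; simp
    have ha0m : a0 ∈ G'.arcs := hasub ha0
    have ha1m : a1 ∈ G'.arcs := hasub ha1
    have htgt' : ∀ a ∈ G.arcs, a ≠ a0 → a ≠ a1 → G'.tgt a = G.tgt a :=
      fun a ha h0 h1 => (hold a ha h0 h1).2
    -- unique in-arcs in G'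
    have hux0' : ∀ a ∈ G'.arcs, G'.tgt a = x0 → a = b0 := by
      intro a ha hta
      rcases harc_cases a ha with ha' | rfl | rfl | rfl
      · exfalso
        by_cases h0 : a = a0
        · subst h0; rw [hta0'] at hta; exact hux0 hta
        · by_cases h1 : a = a1
          · subst h1; rw [hta1'] at hta; exact hvx0 hta
          · rw [htgt' a ha' h0 h1] at hta
            exact h0 (huniq0 a ha' hta)
      · rfl
      · rw [htb1] at hta; exact absurd hta hx01.symm
      · rw [htc] at hta; exact absurd hta hux0
    have hux1' : ∀ a ∈ G'.arcs, G'.tgt a = x1 → a = b1 := by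
      intro a ha hta
      rcases harc_cases a ha with ha' | rfl | rfl | rfl
      · exfalso
        by_cases h0 : a = a0
        · subst h0; rw [hta0'] at hta; exact hux1 hta
        · by_cases h1 : a = a1
          · subst h1; rw [hta1'] at hta; exact hvx1 hta
          · rw [htgt' a ha' h0 h1] at hta
            exact h1 (huniq1 a ha' hta)
      · rw [htb0] at hta; exact absurd hta hx01
      · rfl
      · rw [htc] at hta; exact absurd hta hux1
    have huv'arcs : ∀ a ∈ G'.arcs, G'.tgt a = v → a = a1 := by
      intro a ha hta
      rcases harc_cases a ha with ha' | rfl | rfl | rfl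
      · by_cases h0 : a = a0
        · subst h0; rw [hta0'] at hta; exact absurd hta huv
        · by_cases h1 : a = a1
          · exact h1
          · rw [htgt' a ha' h0 h1] at hta
            exact absurd (hta ▸ hphy.tgt_mem a ha') hv
      · rw [htb0] at hta; exact absurd hta hvx0.symm
      · rw [htb1] at hta; exact absurd hta hvx1.symm
      · rw [htc] at hta; exact absurd hta huv
    have huu'arcs : ∀ a ∈ G'.arcs, G'.tgt a = u → a = a0 ∨ a = c := by
      intro a ha hta
      rcases harc_cases a ha with ha' | rfl | rfl | rfl
      · by_cases h0 : a = a0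
        · exact Or.inl h0
        · by_cases h1 : a = a1
          · subst h1; rw [hta1'] at hta; exact absurd hta (Ne.symm huv)
          · rw [htgt' a ha' h0 h1] at hta
            exact absurd (hta ▸ hphy.tgt_mem a ha') hu
      · rw [htb0] at hta; exact absurd hta hux0.symm
      · rw [htb1] at hta; exact absurd hta hux1.symm
      · exact Or.inr rfl
    have hrnu : r ≠ u := fun hh => hu (hh ▸ hrv)
    have hrnv : r ≠ v := fun hh => hv (hh ▸ hrv)
    -- path counts to v and u in G'
    have hPv : nPaths G' r v = nPaths G r z1 := by
      rw [nPaths_one_in G' hphy' hrnv ha1m hta1' huv'arcs, hsa1]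
      exact htrans z1 hz1v (fun hh => hnox0 a1 ha1 hh) (fun hh => hnox1 a1 ha1 hh) r
    have ha0c : a0 ≠ c := fun hh => hc (hh ▸ ha0)
    have hPu : nPaths G' r u = nPaths G r z0 + nPaths G r z1 := by
      rw [nPaths_two_in G' hphy' hrnu ha0c ha0m hta0' hcm htc huu'arcs, hsa0, hsc, hPv]
      congr 1
      exact htrans z0 hz0v (fun hh => hnox0 a0 ha0 hh) (fun hh => hnox1 a0 ha0 hh) r
    have hGx0 : nPaths G r x0 = nPaths G r z0 := nPaths_one_in G hphy hrx0 ha0 hta0 huniq0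
    have hGx1 : nPaths G r x1 = nPaths G r z1 := nPaths_one_in G hphy hrx1 ha1 hta1 huniq1
    have hc0 := hcount 0 (by simp) r hrG
    have hc1 := hcount 1 (by simp) r hrG
    match i with
    | 0 =>
      rw [hlf 0]
      rw [show nPaths R'.net r (R''.leaf 0) = nPaths G' r x0 from rfl,
        nPaths_one_in G' hphy' hrx0 hb0m htb0 hux0', hsb0, hPu, ← hGx0, ← hGx1, hc0, hc1]
      simp
    | 1 =>
      rw [hlf 1]
      rw [show nPaths R'.net r (R''.leaf 1) = nPaths G' r x1 from rfl,
        nPaths_one_in G' hphy' hrx1 hb1m htb1 hux1', hsb1, hPv, ← hGx1, hc1]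
      simp
    | (k+2) =>
      rw [hlf (k+2)]
      have hk : k + 2 < (p :: q :: s).length := by simpa using hi
      have hne0 : R''.leaf (k+2) ≠ x0 := fun hh => by
        have := hinj (k+2) 0 hk (by simp) hh
        omega
      have hne1 : R''.leaf (k+2) ≠ x1 := fun hh => by
        have := hinj (k+2) 1 hk (by simp) hh
        omega
      rw [show nPaths R'.net r (R''.leaf (k+2)) = nPaths G' r (R''.leaf (k+2)) from rfl,
        htrans _ (hleaf (k+2) hk).1 hne0 hne1 r]
      have := hcount (k+2) hk r hrG
      simpa using this
/-! ### Surgery 3: inserting back -/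

theorem insertBack_realizes {R'' R' : LNet} {t d : List ℕ} {α : ℕ}
    (hreal : RealizesL R'' (t ++ α :: d)) (htne : t ≠ [])
    (hop : InsertBackOp t.length R'' R') :
    RealizesL R' ((α + t.headI) :: (t ++ d)) := by
  obtain ⟨hphy, hleaf, hinj, hsurj, hcount⟩ := hreal
  obtain ⟨u, y1, y2, c1, c2, c3, az, hu, hy1, hy2, huy1, huy2, hy12,
    hc1, hc2, hc3, hc12, hc13, hc23, haz, htaz, hverts, harcs, hold,
    hsaz, htaz', hsc1, htc1, hsc2, htc2, hsc3, htc3, hl0, hl1, hmid, hhigh⟩ := hop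
  set G := R''.net with hG
  set G' := R'.net with hG'
  set j := t.length with hj
  set x0 := R''.leaf 0 with hx0
  set xj := R''.leaf j with hxj
  have hj1 : 1 ≤ j := by
    rw [hj]
    exact List.length_pos_iff.2 htne
  have hL : (t ++ α :: d).length = j + d.length + 1 := by simp [hj]; omega
  have hjL : j < (t ++ α :: d).length := by omega
  have h0L : 0 < (t ++ α :: d).length := by omega
  have hx0leaf : IsLeafN G x0 := hleaf 0 h0L
  have hxjleaf : IsLeafN G xj := hleaf j hjL
  have hx0xj : x0 ≠ xj := fun hh => by
    have := hinj 0 j h0L hjL hh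
    omega
  have hx0v : x0 ∈ G.verts := hx0leaf.1
  have hxjv : xj ∈ G.verts := hxjleaf.1
  have hux0 : u ≠ x0 := fun hh => hu (hh ▸ hx0v)
  have huxj : u ≠ xj := fun hh => hu (hh ▸ hxjv)
  have huniqz : ∀ b ∈ G.arcs, G.tgt b = xj → b = az := inDeg_one_unique haz htaz hxjleaf.2.1
  have hnox0 : ∀ a ∈ G.arcs, G.src a ≠ x0 := outDeg_zero_no_src hx0leaf.2.2
  have hnoxj : ∀ a ∈ G.arcs, G.src a ≠ xj := outDeg_zero_no_src hxjleaf.2.2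
  set z := G.src az with hz
  have hzv : z ∈ G.verts := hphy.src_mem az haz
  have hzx0 : z ≠ x0 := hnox0 az haz
  have hzxj : z ≠ xj := hnoxj az haz
  have hasub : G.arcs ⊆ G'.arcs := by rw [harcs]; exact Finset.subset_union_left
  have hmemv' : ∀ w ∈ G.verts, w ≠ xj → w ∈ G'.verts := by
    intro w hw hwj
    rw [hverts]
    exact Finset.mem_union_left _ (Finset.mem_erase.2 ⟨hwj, hw⟩)
  have huv' : u ∈ G'.verts := by rw [hverts]; simp
  have hy1v' : y1 ∈ G'.verts := by rw [hverts]; simp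
  have hy2v' : y2 ∈ G'.verts := by rw [hverts]; simp
  have hvcases : ∀ w ∈ G'.verts, (w ∈ G.verts ∧ w ≠ xj) ∨ w = u ∨ w = y1 ∨ w = y2 := by
    intro w hw
    rw [hverts] at hw
    rcases Finset.mem_union.1 hw with hw | hw
    · exact Or.inl ⟨Finset.mem_of_mem_erase hw, Finset.ne_of_mem_erase hw⟩
    · simp only [Finset.mem_insert, Finset.mem_singleton] at hw
      exact Or.inr hw
  have harc_cases : ∀ a ∈ G'.arcs, a ∈ G.arcs ∨ a = c1 ∨ a = c2 ∨ a = c3 := by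
    intro a ha
    rw [harcs] at ha
    rcases Finset.mem_union.1 ha with ha | ha
    · exact Or.inl ha
    · simp only [Finset.mem_insert, Finset.mem_singleton] at ha
      exact Or.inr ha
  -- in-degrees
  have hin : ∀ w, inDeg G' w =
      ((G.arcs.erase az).filter (fun a => G.tgt a = w)).card
        + ((if u = w then 1 else 0) + (if u = w then 1 else 0)
          + (if y1 = w then 1 else 0) + (if y2 = w then 1 else 0)) := by
    intro w
    unfold inDeg
    rw [harcs, card_filter_union3 _ hc1 hc2 hc3 hc12 hc13 hc23,
      card_filter_split_one (fun a => G'.tgt a = w) (fun a => G.tgt a = w) haz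
        (fun a ha hne => (congrArg (fun x => x = w) (hold a ha hne).2).to_iff)]
    simp only [htc1, htc2, htc3, htaz']
    ring
  have hbaseG : ∀ w, inDeg G w =
      ((G.arcs.erase az).filter (fun a => G.tgt a = w)).card
        + (if xj = w then 1 else 0) := by
    intro w
    unfold inDeg
    rw [card_filter_split_one (fun a => G.tgt a = w) (fun a => G.tgt a = w) haz
      (fun a _ _ => Iff.rfl)]
    simp only [htaz]
  have hbaseold : ∀ w, w ≠ xj →
      ((G.arcs.erase az).filter (fun a => G.tgt a = w)).card = inDeg G w := by
    intro w hw
    have := hbaseG w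
    rw [if_neg (fun hh : xj = w => hw hh.symm)] at this
    omega
  have hbasefresh : ∀ w, w ∉ G.verts →
      ((G.arcs.erase az).filter (fun a => G.tgt a = w)).card = 0 := by
    intro w hw
    rw [Finset.card_eq_zero, Finset.filter_eq_empty_iff]
    intro a ha hh
    exact hw (hh ▸ hphy.tgt_mem a (Finset.mem_of_mem_erase ha))
  have hinold : ∀ w ∈ G.verts, w ≠ xj → inDeg G' w = inDeg G w := by
    intro w hw hwj
    rw [hin, hbaseold w hwj, if_neg (fun hh : u = w => hu (by rw [hh]; exact hw)),
      if_neg (fun hh : y1 = w => hy1 (by rw [hh]; exact hw)),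
      if_neg (fun hh : y2 = w => hy2 (by rw [hh]; exact hw))]
    omega
  have hinu : inDeg G' u = 2 := by
    rw [hin, hbasefresh u hu, if_pos rfl, if_neg (fun hh : y1 = u => huy1 hh.symm),
      if_neg (fun hh : y2 = u => huy2 hh.symm)]
  have hiny1 : inDeg G' y1 = 1 := by
    rw [hin, hbasefresh y1 hy1, if_neg huy1, if_pos rfl,
      if_neg (fun hh : y2 = y1 => hy12 hh.symm)]
  have hiny2 : inDeg G' y2 = 1 := by
    rw [hin, hbasefresh y2 hy2, if_neg huy2, if_neg hy12, if_pos rfl]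
  -- out-degrees
  have hout : ∀ w, outDeg G' w = outDeg G w
      + ((if x0 = w then 1 else 0) + (if u = w then 1 else 0) + (if x0 = w then 1 else 0)) := by
    intro w
    have hcg : (G.arcs.filter (fun a => G'.src a = w)).card
        = (G.arcs.filter (fun a => G.src a = w)).card :=
      card_filter_congr _ _ (fun a ha => by
        by_cases h0 : a = az
        · subst h0; exact (congrArg (fun x => x = w) hsaz).to_iff
        · exact (congrArg (fun x => x = w) (hold a ha h0).1).to_iff)
    unfold outDeg
    rw [harcs, card_filter_union3 _ hc1 hc2 hc3 hc12 hc13 hc23]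
    simp only [hsc1, hsc2, hsc3]
    omega
  have houtold : ∀ w ∈ G.verts, w ≠ x0 → outDeg G' w = outDeg G w := by
    intro w hw hwx
    rw [hout, if_neg (fun hh : x0 = w => hwx hh.symm),
      if_neg (fun hh : u = w => hu (by rw [hh]; exact hw))]
    omega
  have houtx0 : outDeg G' x0 = 2 := by
    rw [hout, hx0leaf.2.2, if_pos rfl, if_neg hux0]
  have houtu : outDeg G' u = 1 := by
    rw [hout, outDeg_zero_fresh hphy.src_mem hu, if_neg hux0.symm, if_pos rfl]
  have houty1 : outDeg G' y1 = 0 := by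
    rw [hout, outDeg_zero_fresh hphy.src_mem hy1,
      if_neg (fun hh : x0 = y1 => hy1 (by rw [← hh]; exact hx0v)), if_neg huy1]
  have houty2 : outDeg G' y2 = 0 := by
    rw [hout, outDeg_zero_fresh hphy.src_mem hy2,
      if_neg (fun hh : x0 = y2 => hy2 (by rw [← hh]; exact hx0v)), if_neg huy2]
  -- transfer setup
  set R : Set ℕ := {u, y1, y2} with hR
  set ρ : ℕ → ℕ := fun w => if w = u then 0 else 1 with hρ
  have hgoodold : ∀ a ∈ G.arcs, a ≠ az → GoodArc G G' a :=
    fun a ha h0 => ⟨ha, (hold a ha h0).1, (hold a ha h0).2⟩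
  have hclos : ∀ a ∈ G'.arcs, G'.src a ∈ R → G'.tgt a ∈ R ∧ ρ (G'.src a) < ρ (G'.tgt a) := by
    intro a ha hsa
    rcases harc_cases a ha with ha' | rfl | rfl | rfl
    · exfalso
      have hsrc' : G'.src a = G.src a := by
        by_cases h0 : a = az
        · subst h0; exact hsaz
        · exact (hold a ha' h0).1
      rw [hsrc'] at hsa
      have hsv := hphy.src_mem a ha'
      rcases hsa with hh | hh | hh
      · exact hu (hh ▸ hsv)
      · exact hy1 (hh ▸ hsv)
      · exact hy2 (hh ▸ hsv)
    · exfalso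
      rw [hsc1] at hsa
      rcases hsa with hh | hh | hh
      · exact hux0 hh.symm
      · exact hy1 (by rw [← hh]; exact hx0v)
      · exact hy2 (by rw [← hh]; exact hx0v)
    · refine ⟨by rw [htc2]; exact Or.inr (Or.inl rfl), ?_⟩
      rw [hsc2, htc2]
      have h' : y1 ≠ u := fun hh => huy1 hh.symm
      simp [hρ, h']
    · exfalso
      rw [hsc3] at hsa
      rcases hsa with hh | hh | hh
      · exact hux0 hh.symm
      · exact hy1 (by rw [← hh]; exact hx0v)
      · exact hy2 (by rw [← hh]; exact hx0v)
  have hbad : ∀ a ∈ G'.arcs, ¬ GoodArc G G' a → G'.tgt a ∈ R := by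
    intro a ha hng
    rcases harc_cases a ha with ha' | rfl | rfl | rfl
    · by_cases h0 : a = az
      · subst h0; rw [htaz']; exact Or.inl rfl
      · exact absurd (hgoodold a ha' h0) hng
    · rw [htc1]; exact Or.inl rfl
    · rw [htc2]; exact Or.inr (Or.inl rfl)
    · rw [htc3]; exact Or.inr (Or.inr rfl)
  set D : Set ℕ := {xj} with hD0
  have hmodD : ∀ a ∈ G.arcs, ¬ GoodArc G G' a → G.tgt a ∈ D := by
    intro a ha hng
    by_cases h0 : a = az
    · subst h0; rw [htaz]; exact rfl
    · exact absurd (hgoodold a ha h0) hng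
  have hDno : ∀ a ∈ G.arcs, G.src a ∉ D := fun a ha hh => hnoxj a ha hh
  have htrans : ∀ w ∈ G.verts, w ≠ xj → ∀ r, nPaths G' r w = nPaths G r w := by
    intro w hw hwj r
    refine nPaths_transfer (ρ := ρ) hphy hasub hclos hbad hmodD hDno hw
      (hmemv' w hw hwj) ?_ ?_ r
    · rintro (hh | hh | hh)
      · exact hu (hh ▸ hw)
      · exact hy1 (hh ▸ hw)
      · exact hy2 (hh ▸ hw)
    · exact fun hh => hwj hh
  -- roots
  have hroot_iff : ∀ r, IsRootN G' r ↔ IsRootN G r := by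
    intro r
    constructor
    · rintro ⟨hrv, hrin⟩
      rcases hvcases r hrv with ⟨hrv', hrj⟩ | rfl | rfl | rfl
      · exact ⟨hrv', by rw [← hinold r hrv' hrj]; exact hrin⟩
      · rw [hinu] at hrin; omega
      · rw [hiny1] at hrin; omega
      · rw [hiny2] at hrin; omega
    · rintro ⟨hrv, hrin⟩
      have hrj : r ≠ xj := fun hh => by
        rw [hh, hxjleaf.2.1] at hrin
        omega
      exact ⟨hmemv' r hrv hrj, by rw [hinold r hrv hrj]; exact hrin⟩
  have hphy' : IsPhylo G' := by
    constructor
    · intro a ha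
      rcases harc_cases a ha with ha' | rfl | rfl | rfl
      · by_cases h0 : a = az
        · subst h0; rw [hsaz]; exact hmemv' z hzv hzxj
        · rw [(hold a ha' h0).1]
          exact hmemv' _ (hphy.src_mem a ha') (hnoxj a ha')
      · rw [hsc1]; exact hmemv' x0 hx0v hx0xj
      · rw [hsc2]; exact huv'
      · rw [hsc3]; exact hmemv' x0 hx0v hx0xj
    · intro a ha
      rcases harc_cases a ha with ha' | rfl | rfl | rfl
      · by_cases h0 : a = az
        · subst h0; rw [htaz']; exact huv'
        · rw [(hold a ha' h0).2]
          refine hmemv' _ (hphy.tgt_mem a ha') (fun hh => h0 (huniqz a ha' hh))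
      · rw [htc1]; exact huv'
      · rw [htc2]; exact hy1v'
      · rw [htc3]; exact hy2v'
    · intro a ha
      rcases harc_cases a ha with ha' | rfl | rfl | rfl
      · by_cases h0 : a = az
        · subst h0; rw [hsaz, htaz']; exact fun hh => hu (hh ▸ hzv)
        · rw [(hold a ha' h0).1, (hold a ha' h0).2]; exact hphy.no_loop a ha'
      · rw [hsc1, htc1]; exact fun hh => hu (hh ▸ hx0v)
      · rw [hsc2, htc2]; exact huy1
      · rw [hsc3, htc3]; exact fun hh => hy2 (hh ▸ hx0v)
    · exact acyclic_transfer (ρ := ρ) hphy hasub hclos hbad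
    · obtain ⟨r, hr, hru⟩ := hphy.root_exu
      exact ⟨r, (hroot_iff r).2 hr, fun r' hr' => hru r' ((hroot_iff r').1 hr')⟩
    · intro r hr
      have hrG := (hroot_iff r).1 hr
      have hrx0 : r ≠ x0 := fun hh => by
        have := hrG.2; rw [hh, hx0leaf.2.1] at this; omega
      rw [houtold r hrG.1 hrx0]
      exact hphy.root_out r hrG
    · intro w hw
      rcases hvcases w hw with ⟨hwv, hwj⟩ | rfl | rfl | rfl
      · have hw' := hmemv' w hwv hwj
        rcases hphy.types w hwv with hh | hh | hh | hh
        · exact Or.inl ⟨hw', by rw [hinold w hwv hwj]; exact hh.2⟩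
        · by_cases hwx : w = x0
          · subst hwx
            exact Or.inr (Or.inr (Or.inl ⟨hw', by rw [hinold _ hwv hwj]; exact hh.2.1,
              houtx0⟩))
          · exact Or.inr (Or.inl ⟨hw', by rw [hinold w hwv hwj]; exact hh.2.1,
              by rw [houtold w hwv hwx]; exact hh.2.2⟩)
        · have hwx : w ≠ x0 := by
            intro hh'
            have := hh.2.2
            rw [hh', hx0leaf.2.2] at this
            omega
          exact Or.inr (Or.inr (Or.inl ⟨hw', by rw [hinold w hwv hwj]; exact hh.2.1,
            by rw [houtold w hwv hwx]; exact hh.2.2⟩))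
        · have hwx : w ≠ x0 := by
            intro hh'
            have := hh.2.2
            rw [hh', hx0leaf.2.2] at this
            omega
          exact Or.inr (Or.inr (Or.inr ⟨hw', by rw [hinold w hwv hwj]; exact hh.2.1,
            by rw [houtold w hwv hwx]; exact hh.2.2⟩))
      · exact Or.inr (Or.inr (Or.inr ⟨huv', hinu, houtu⟩))
      · exact Or.inr (Or.inl ⟨hy1v', hiny1, houty1⟩)
      · exact Or.inr (Or.inl ⟨hy2v', hiny2, houty2⟩)
  -- leaf characterization
  have hleafy1 : IsLeafN G' y1 := ⟨hy1v', hiny1, houty1⟩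
  have hleafy2 : IsLeafN G' y2 := ⟨hy2v', hiny2, houty2⟩
  have hleafold : ∀ w, IsLeafN G w → w ≠ x0 → w ≠ xj → IsLeafN G' w := by
    intro w hw hwx hwj
    exact ⟨hmemv' w hw.1 hwj, by rw [hinold w hw.1 hwj]; exact hw.2.1,
      by rw [houtold w hw.1 hwx]; exact hw.2.2⟩
  -- index arithmetic for the new leaf map
  have hidx : ∀ i, 2 ≤ i → i < (t ++ α :: d).length →
      ∃ k, R'.leaf i = R''.leaf k ∧ k < (t ++ α :: d).length ∧ k ≠ 0 ∧ k ≠ j ∧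
        (i ≤ j → k = i - 1) ∧ (j < i → k = i) := by
    intro i h2 hiL
    by_cases hij : i ≤ j
    · refine ⟨i - 1, ?_, by omega, by omega, by omega, fun _ => rfl, fun hh => by omega⟩
      have h1 : 1 ≤ i - 1 := by omega
      have h2' : i - 1 < j := by omega
      have h3 : i - 1 + 1 = i := by omega
      rw [← h3]
      exact hmid (i - 1) h1 h2'
    · exact ⟨i, hhigh i (by omega), hiL, by omega, by omega, fun hh => by omega, fun _ => rfl⟩
  have hlen' : ((α + t.headI) :: (t ++ d)).length = (t ++ α :: d).length := by
    simp
    omega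
  refine ⟨hphy', ?_, ?_, ?_, ?_⟩
  · -- leaves
    intro i hi
    rw [hlen'] at hi
    match i, hi with
    | 0, hi => rw [hl0]; exact hleafy1
    | 1, hi => rw [hl1]; exact hleafy2
    | (k+2), hi =>
      obtain ⟨k', hmap, hk'L, hk'0, hk'j, _, _⟩ := hidx (k+2) (by omega) hi
      rw [hmap]
      refine hleafold _ (hleaf k' hk'L) ?_ (fun hh => hk'j (hinj k' j hk'L hjL hh))
      intro hh
      exact hk'0 (hinj k' 0 hk'L h0L hh)
  · -- injectivity
    intro i i' hi hi' hij
    rw [hlen'] at hi hi'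
    have hy1G : y1 ∉ G.verts := hy1
    match i, i', hi, hi' with
    | 0, 0, _, _ => rfl
    | 1, 1, _, _ => rfl
    | 0, 1, _, _ => rw [hl0, hl1] at hij; exact absurd hij hy12
    | 1, 0, _, _ => rw [hl0, hl1] at hij; exact absurd hij.symm hy12
    | 0, (k+2), _, hi' =>
      obtain ⟨k', hmap, hk'L, _, _, _, _⟩ := hidx (k+2) (by omega) hi'
      rw [hl0, hmap] at hij
      exact absurd (hleaf k' hk'L).1 (by rw [← hij]; exact hy1)
    | 1, (k+2), _, hi' =>
      obtain ⟨k', hmap, hk'L, _, _, _, _⟩ := hidx (k+2) (by omega) hi'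
      rw [hl1, hmap] at hij
      exact absurd (hleaf k' hk'L).1 (by rw [← hij]; exact hy2)
    | (k+2), 0, hi, _ =>
      obtain ⟨k', hmap, hk'L, _, _, _, _⟩ := hidx (k+2) (by omega) hi
      rw [hl0, hmap] at hij
      exact absurd (hleaf k' hk'L).1 (by rw [hij]; exact hy1)
    | (k+2), 1, hi, _ =>
      obtain ⟨k', hmap, hk'L, _, _, _, _⟩ := hidx (k+2) (by omega) hi
      rw [hl1, hmap] at hij
      exact absurd (hleaf k' hk'L).1 (by rw [hij]; exact hy2)
    | (k+2), (k'+2), hi, hi' =>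
      obtain ⟨a1, hmap1, ha1L, _, _, hle1, hgt1⟩ := hidx (k+2) (by omega) hi
      obtain ⟨a2, hmap2, ha2L, _, _, hle2, hgt2⟩ := hidx (k'+2) (by omega) hi'
      rw [hmap1, hmap2] at hij
      have heq := hinj a1 a2 ha1L ha2L hij
      by_cases hb1 : k + 2 ≤ j <;> by_cases hb2 : k' + 2 ≤ j
      · have := hle1 hb1; have := hle2 hb2; omega
      · have := hle1 hb1; have := hgt2 (by omega); omega
      · have := hgt1 (by omega); have := hle2 hb2; omega
      · have := hgt1 (by omega); have := hgt2 (by omega); omega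
  · -- surjectivity
    intro w hw
    rcases hvcases w hw.1 with ⟨hwv, hwj⟩ | heq | heq | heq
    · have hwx : w ≠ x0 := by
        intro hh
        have := hw.2.2
        rw [hh, houtx0] at this
        omega
      have hwleaf : IsLeafN G w :=
        ⟨hwv, by rw [← hinold w hwv hwj]; exact hw.2.1,
         by rw [← houtold w hwv hwx]; exact hw.2.2⟩
      obtain ⟨i, hi, hiv⟩ := hsurj w hwleaf
      have hi0 : i ≠ 0 := fun hh => hwx (by rw [← hiv, hh])
      have hij : i ≠ j := fun hh => hwj (by rw [← hiv, hh])
      by_cases hlt : i < j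
      · refine ⟨i + 1, by rw [hlen']; omega, ?_⟩
        rw [hmid i (by omega) hlt, hiv]
      · refine ⟨i, by rw [hlen']; omega, ?_⟩
        rw [hhigh i (by omega), hiv]
    · exact absurd (heq ▸ hw).2.2 (by rw [houtu]; omega)
    · exact ⟨0, by rw [hlen']; omega, by rw [hl0, heq]⟩
    · exact ⟨1, by rw [hlen']; omega, by rw [hl1, heq]⟩
  · -- path counts
    intro i hi r hr
    rw [hlen'] at hi
    have hrG : IsRootN G r := (hroot_iff r).1 hr
    have hrv : r ∈ G.verts := hrG.1
    have hrx0 : r ≠ x0 := fun hh => by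
      have := hrG.2; rw [hh, hx0leaf.2.1] at this; omega
    have hrxj : r ≠ xj := fun hh => by
      have := hrG.2; rw [hh, hxjleaf.2.1] at this; omega
    have hru : r ≠ u := fun hh => hu (hh ▸ hrv)
    have hry1 : r ≠ y1 := fun hh => hy1 (hh ▸ hrv)
    have hry2 : r ≠ y2 := fun hh => hy2 (hh ▸ hrv)
    have hc1m : c1 ∈ G'.arcs := by rw [harcs]; simp
    have hc2m : c2 ∈ G'.arcs := by rw [harcs]; simp
    have hc3m : c3 ∈ G'.arcs := by rw [harcs]; simp
    have hazm : az ∈ G'.arcs := hasub haz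
    have htgt' : ∀ a ∈ G.arcs, a ≠ az → G'.tgt a = G.tgt a := fun a ha h0 => (hold a ha h0).2
    have huniy1 : ∀ a ∈ G'.arcs, G'.tgt a = y1 → a = c2 := by
      intro a ha hta
      rcases harc_cases a ha with ha' | rfl | rfl | rfl
      · exfalso
        by_cases h0 : a = az
        · subst h0; rw [htaz'] at hta; exact huy1 hta
        · rw [htgt' a ha' h0] at hta
          exact hy1 (hta ▸ hphy.tgt_mem a ha')
      · rw [htc1] at hta; exact absurd hta huy1
      · rfl
      · rw [htc3] at hta; exact absurd hta (Ne.symm hy12)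
    have huniy2 : ∀ a ∈ G'.arcs, G'.tgt a = y2 → a = c3 := by
      intro a ha hta
      rcases harc_cases a ha with ha' | rfl | rfl | rfl
      · exfalso
        by_cases h0 : a = az
        · subst h0; rw [htaz'] at hta; exact huy2 hta
        · rw [htgt' a ha' h0] at hta
          exact hy2 (hta ▸ hphy.tgt_mem a ha')
      · rw [htc1] at hta; exact absurd hta huy2
      · rw [htc2] at hta; exact absurd hta hy12
      · rfl
    have huniu : ∀ a ∈ G'.arcs, G'.tgt a = u → a = az ∨ a = c1 := by
      intro a ha hta
      rcases harc_cases a ha with ha' | rfl | rfl | rfl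
      · by_cases h0 : a = az
        · exact Or.inl h0
        · rw [htgt' a ha' h0] at hta
          exact absurd (hta ▸ hphy.tgt_mem a ha') hu
      · exact Or.inr rfl
      · rw [htc2] at hta; exact absurd hta (Ne.symm huy1)
      · rw [htc3] at hta; exact absurd hta (Ne.symm huy2)
    have hazc1 : az ≠ c1 := fun hh => hc1 (hh ▸ haz)
    have hGxj : nPaths G r xj = nPaths G r z := nPaths_one_in G hphy hrxj haz htaz huniqz
    have hPx0 : nPaths G' r x0 = nPaths G r x0 := htrans x0 hx0v hx0xj r
    have hPu : nPaths G' r u = nPaths G r z + nPaths G r x0 := by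
      rw [nPaths_two_in G' hphy' hru hazc1 hazm htaz' hc1m htc1 huniu, hsaz, hsc1, hPx0]
      congr 1
      exact htrans z hzv hzxj r
    have hcj := hcount j hjL r hrG
    have hc0 := hcount 0 h0L r hrG
    have hm0 : (t ++ α :: d).getD 0 0 = t.headI := by
      rw [List.getD_append _ _ _ _ (by omega)]
      cases t with
      | nil => exact absurd rfl htne
      | cons a t' => rfl
    have hmj : (t ++ α :: d).getD j 0 = α := by
      rw [List.getD_append_right _ _ _ _ (le_refl _)]
      simp [hj]
    have ht0 : (t ++ d).getD 0 0 = t.headI := by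
      rw [List.getD_append _ _ _ _ (by omega)]
      cases t with
      | nil => exact absurd rfl htne
      | cons a t' => rfl
    match i, hi with
    | 0, _ =>
      rw [hl0]
      rw [show nPaths R'.net r y1 = nPaths G' r y1 from rfl,
        nPaths_one_in G' hphy' hry1 hc2m htc2 huniy1, hsc2, hPu, ← hGxj, hcj, hc0, hmj, hm0]
      simp
    | 1, _ =>
      rw [hl1]
      rw [show nPaths R'.net r y2 = nPaths G' r y2 from rfl,
        nPaths_one_in G' hphy' hry2 hc3m htc3 huniy2, hsc3, hPx0, hc0, hm0,
        List.getD_cons_succ, ht0]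
    | (k+2), hi =>
      obtain ⟨k', hmap, hk'L, hk'0, hk'j, hle, hgt⟩ := hidx (k+2) (by omega) hi
      rw [hmap]
      rw [show nPaths R'.net r (R''.leaf k') = nPaths G' r (R''.leaf k') from rfl,
        htrans _ (hleaf k' hk'L).1 (fun hh => hk'j (hinj k' j hk'L hjL hh)) r,
        hcount k' hk'L r hrG, List.getD_cons_succ]
      by_cases hb : k + 2 ≤ j
      · have hk' : k' = k + 1 := hle hb
        subst hk'
        rw [List.getD_append _ _ _ _ (by omega), List.getD_append _ _ _ _ (by omega)]
      · have hk' : k' = k + 2 := hgt (by omega)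
        subst hk'
        rw [List.getD_append_right _ _ _ _ (by omega),
          List.getD_append_right _ _ _ _ (by omega)]
        have harith : k + 2 - t.length = (k + 1 - t.length) + 1 := by omega
        rw [harith, List.getD_cons_succ]
/-! ### Profile lemmas -/

theorem simpStep_of_simple {l : List ℕ} (h : IsSimpleP l) : simpStep l = l := by
  obtain ⟨h1, h2, h3⟩ := h
  unfold simpStep
  rw [if_pos ⟨h2, h3⟩]

theorem insertDesc_eq (x : ℕ) (l : List ℕ) :
    insertDesc x l = l.takeWhile (fun y => decide (x ≤ y)) ++ x ::
      l.dropWhile (fun y => decide (x ≤ y)) := by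
  induction l with
  | nil => rfl
  | cons y ys ih =>
    by_cases h : x ≤ y
    · simp only [insertDesc, if_pos h, List.takeWhile_cons, List.dropWhile_cons,
        decide_eq_true h, ih]
      simp
    · simp only [insertDesc, if_neg h, List.takeWhile_cons, List.dropWhile_cons,
        decide_eq_false h]
      simp
/-- For any ploidy profile `m` on `X` with terminal element `mt`
and any choice of core network for `m` (i.e. a realization of `mt`), any network
`N(m)` obtained by the traceback through the simplification sequence of `m` is a
phylogenetic network on `X` realizing `m`. -/
theorem traceback_realizes (m mt : List ℕ) (hm : IsProfileL m)
    (ht : IsTerminal m mt) (core : LNet) (hcore : RealizesL core mt) :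
    ∀ N : LNet, TracebackFrom core m N → RealizesL N m := by
  obtain ⟨hsimple_mt, k0, hk0⟩ := ht
  suffices H : ∀ (N : LNet) (m' : List ℕ), TracebackFrom core m' N →
      (∃ k, simpStep^[k] m' = mt) → RealizesL N m' by
    exact fun N hN => H N m hN ⟨k0, hk0⟩
  intro N m' hTB
  induction hTB with
  | base m1 hsimp =>
    rintro ⟨k, hk⟩
    have hfix : ∀ n, simpStep^[n] m1 = m1 := by
      intro n
      induction n with
      | zero => rfl
      | succ n ihn => rw [Function.iterate_succ_apply', ihn, simpStep_of_simple hsimp]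
    have hmt : mt = m1 := by rw [← hk, hfix k]
    exact hmt ▸ hcore
  | step m' R'' R' hTB' hstep ih =>
    rintro ⟨k, hk⟩
    obtain ⟨hlen, hnsimp, hcase⟩ := hstep
    have hk' : ∃ k', simpStep^[k'] (simpStep m') = mt := by
      cases k with
      | zero =>
        have h0 : m' = mt := by simpa using hk
        exact absurd (h0 ▸ hsimple_mt) hnsimp
      | succ k =>
        exact ⟨k, by rw [← Function.iterate_succ_apply]; exact hk⟩
    have hR'' := ih hk'
    obtain ⟨m1, m2, rest, rfl⟩ : ∃ m1 m2 rest, m' = m1 :: m2 :: rest := by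
      match m', hlen with
      | m1 :: m2 :: rest, _ => exact ⟨m1, m2, rest, rfl⟩
    have hcond : ¬(2 ≤ (m1 :: m2 :: rest).headI ∧ ∀ x ∈ (m1 :: m2 :: rest).tail, x = 1) :=
      fun hc => hnsimp ⟨by simp, hc.1, hc.2⟩
    rcases hcase with ⟨heq, hop⟩ | ⟨hlt, hop⟩ | ⟨hpos, hle, hop⟩
    · have hm12 : m1 = m2 := by simpa using heq
      have hss : simpStep (m1 :: m2 :: rest) = m2 :: rest := by
        unfold simpStep
        rw [if_neg hcond]
        simp [hm12]
      rw [hss] at hR''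
      have hres := cherryExpand_realizes hR'' hop
      rwa [hm12]
    · have hm2lt : m2 < m1 - m2 := by simpa using hlt
      have hne : m1 ≠ m2 := by omega
      have hss : simpStep (m1 :: m2 :: rest) = (m1 - m2) :: m2 :: rest := by
        unfold simpStep
        rw [if_neg hcond]
        simp [hne, hm2lt]
      rw [hss] at hR''
      have hres := addArc_realizes hR'' hop
      have harith : m1 - m2 + m2 = m1 := by omega
      rwa [harith] at hres
    · have hpos' : 0 < m1 - m2 := by simpa using hpos
      have hle' : m1 - m2 ≤ m2 := by simpa using hle
      have hne : m1 ≠ m2 := by omega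
      have hnlt : ¬(m2 < m1 - m2) := by omega
      have hss : simpStep (m1 :: m2 :: rest) = insertDesc (m1 - m2) (m2 :: rest) := by
        unfold simpStep
        rw [if_neg hcond]
        simp [hne, hnlt]
      set t := (m2 :: rest).takeWhile (fun y => decide (m1 - m2 ≤ y)) with ht
      set dd := (m2 :: rest).dropWhile (fun y => decide (m1 - m2 ≤ y)) with hd
      have hins : insertDesc (m1 - m2) (m2 :: rest) = t ++ (m1 - m2) :: dd :=
        insertDesc_eq _ _
      have htd : t ++ dd = m2 :: rest := by
        rw [ht, hd]
        exact List.takeWhile_append_dropWhile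
      have ht' : t = m2 :: rest.takeWhile (fun y => decide (m1 - m2 ≤ y)) := by
        rw [ht]
        simp [List.takeWhile_cons, hle']
        omega
      have htne : t ≠ [] := by rw [ht']; simp
      have hthead : t.headI = m2 := by rw [ht']; rfl
      rw [hss, hins] at hR''
      have hop' : InsertBackOp t.length R'' R' := hop
      have hres := insertBack_realizes hR'' htne hop'
      rw [hthead, htd] at hres
      have harith : m1 - m2 + m2 = m1 := by omega
      rwa [harith] at hres

end Ploidy
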